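/- arXiv:1106.3269 — 7 statements merged into one kernel-verified Lean document; each statement's English description precedes it below -/
import Mathlib

section
/- For every ψ̂ ∈ M_0 there exists a unique φ̂ ∈ M satisfying the discrete backward scheme (Ê_φ) with data ψ̂ (equations for 0 ≤ i ≤ I−1, 0 ≤ j ≤ J, with terminal condition φ̂_{I,j} = exp(u_T(x_j)/σ²)). Hence the map Φ̂ : M_0 → M sending ψ̂ to this solution is well defined. -/
noncomputable section

open Real Filter

/-- Sup of `|g|` over `[0,1]` (the sup norm `‖g‖_∞`). -/
def supIcc (g : ℝ → ℝ) : ℝ := ⨆ x : Set.Icc (0:ℝ) 1, |g (x : ℝ)|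

/-- Sup of `|f|` over `[0,1] × ℝ` (the sup norm `‖f‖_∞`). -/
def supF (f : ℝ → ℝ → ℝ) : ℝ := ⨆ p : Set.Icc (0:ℝ) 1 × ℝ, |f (p.1 : ℝ) p.2|

/-- Membership in `M_ε`: all grid entries (for `i ≤ I`, `j ≤ J`) are at least `ε`. -/
def MemM (I J : ℕ) (ε : ℝ) (m : ℕ → ℕ → ℝ) : Prop :=
  ∀ i ≤ I, ∀ j ≤ J, ε ≤ m i j

/-- The discrete backward scheme `(Ê_φ)` with data `ψ`.  Here `Δt = T/I`, `Δx = 1/J`,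
`x_j = j/J`, and the Neumann conventions `m_{i,-1} = m_{i,0}`, `m_{i,J+1} = m_{i,J}`
are realized by the clamped indices `j - 1` (truncated `ℕ`-subtraction) and `min (j+1) J`. -/
def BScheme (T σ : ℝ) (I J : ℕ) (f : ℝ → ℝ → ℝ) (uT : ℝ → ℝ)
    (ψ φ : ℕ → ℕ → ℝ) : Prop :=
  (∀ i < I, ∀ j ≤ J,
      (φ (i+1) j - φ i j) / (T / (I:ℝ))
        + σ^2 / 2 * ((φ i (min (j+1) J) - 2 * φ i j + φ i (j-1)) / (1/(J:ℝ))^2)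
      = -(1/σ^2) * f ((j:ℝ)/(J:ℝ)) (φ i j * ψ i j) * φ i j)
  ∧ ∀ j ≤ J, φ I j = Real.exp (uT ((j:ℝ)/(J:ℝ)) / σ^2)

/-- The discrete forward scheme `(Ê_ψ)` with data `φ` (same conventions as `BScheme`). -/
def FScheme (T σ : ℝ) (I J : ℕ) (f : ℝ → ℝ → ℝ) (m0 : ℝ → ℝ)
    (φ ψ : ℕ → ℕ → ℝ) : Prop :=
  (∀ i < I, ∀ j ≤ J,
      (ψ (i+1) j - ψ i j) / (T / (I:ℝ))
        - σ^2 / 2 * ((ψ (i+1) (min (j+1) J) - 2 * ψ (i+1) j + ψ (i+1) (j-1)) / (1/(J:ℝ))^2)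
      = (1/σ^2) * f ((j:ℝ)/(J:ℝ)) (φ (i+1) j * ψ (i+1) j) * ψ (i+1) j)
  ∧ ∀ j ≤ J, ψ 0 j = m0 ((j:ℝ)/(J:ℝ)) / φ 0 j

/-- Squared grid norm `‖m‖² = max_{0 ≤ i ≤ I} (1/(J+1)) Σ_{j=0}^{J} m_{i,j}²`. -/
def gnormSq (I J : ℕ) (m : ℕ → ℕ → ℝ) : ℝ :=
  (Finset.range (I+1)).sup' (Finset.nonempty_range_iff.mpr (Nat.succ_ne_zero I))
    (fun i => (1/((J:ℝ)+1)) * ∑ j ∈ Finset.range (J+1), (m i j)^2)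

/-- Grid norm `‖m‖`. -/
def gnorm (I J : ℕ) (m : ℕ → ℕ → ℝ) : ℝ := Real.sqrt (gnormSq I J m)

def LEq (T σ : ℝ) (I J : ℕ) (f : ℝ → ℝ → ℝ) (c w v : ℕ → ℝ) : Prop :=
  ∀ j ≤ J, (w j - v j) / (T / (I:ℝ))
      + σ^2 / 2 * ((v (min (j+1) J) - 2 * v j + v (j-1)) / (1/(J:ℝ))^2)
    = -(1/σ^2) * f ((j:ℝ)/(J:ℝ)) (v j * c j) * v j

lemma xmem {J : ℕ} (hJ : 1 ≤ J) {j : ℕ} (hj : j ≤ J) : ((j:ℝ)/(J:ℝ)) ∈ Set.Icc (0:ℝ) 1 := by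
  have hJ0 : (0:ℝ) < J := by exact_mod_cast Nat.pos_of_ne_zero (by omega)
  constructor
  · positivity
  · rw [div_le_one hJ0]; exact_mod_cast hj

lemma level_exists (T σ : ℝ) (hT : 0 < T) (hσ : 0 < σ) (I J : ℕ) (hI : 1 ≤ I) (hJ : 1 ≤ J)
    (f : ℝ → ℝ → ℝ) (hfc : ∀ x ∈ Set.Icc (0:ℝ) 1, Continuous (f x))
    (hfneg : ∀ x ∈ Set.Icc (0:ℝ) 1, ∀ ξ : ℝ, f x ξ ≤ 0)
    (c w : ℕ → ℝ) : ∃ v : ℕ → ℝ, LEq T σ I J f c w v := by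
  have hI0 : (0:ℝ) < I := by exact_mod_cast Nat.pos_of_ne_zero (by omega)
  have hJ0 : (0:ℝ) < J := by exact_mod_cast Nat.pos_of_ne_zero (by omega)
  set a : ℝ := (I:ℝ)/T with ha
  have haa : 0 < a := div_pos hI0 hT
  set κ : ℝ := σ^2 * (J:ℝ)^2 / 2 with hκ
  have hκ0 : 0 < κ := by positivity
  set n : ℕ → ℝ → ℝ := fun j s => -(f ((j:ℝ)/(J:ℝ)) (s * c j)) * s / σ^2 with hn
  have hnc : ∀ j ≤ J, Continuous (n j) := by
    intro j hj
    exact (((hfc _ (xmem hJ hj)).comp ((continuous_id.mul continuous_const))).neg.mul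
      continuous_id).div_const _
  set N : ℕ → ℝ → ℝ := fun j ξ => ∫ s in (0:ℝ)..ξ, n j s with hN
  have hNd : ∀ j ≤ J, ∀ ξ, HasDerivAt (N j) (n j ξ) ξ := by
    intro j hj ξ
    exact ((hnc j hj).integral_hasStrictDerivAt 0 ξ).hasDerivAt
  have hNc : ∀ j ≤ J, Continuous (N j) := fun j hj =>
    continuous_iff_continuousAt.2 fun ξ => (hNd j hj ξ).continuousAt
  have hnsign : ∀ j ≤ J, ∀ s : ℝ, 0 ≤ s → 0 ≤ n j s := by
    intro j hj s hs
    have := hfneg _ (xmem hJ hj) (s * c j)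
    rw [hn]
    have : 0 ≤ -(f ((j:ℝ)/(J:ℝ)) (s * c j)) := by linarith
    positivity
  have hnsign' : ∀ j ≤ J, ∀ s : ℝ, s ≤ 0 → n j s ≤ 0 := by
    intro j hj s hs
    have h1 := hfneg _ (xmem hJ hj) (s * c j)
    rw [hn]
    simp only
    rw [div_nonpos_iff]
    right
    constructor
    · exact mul_nonpos_of_nonneg_of_nonpos (by linarith) hs
    · positivity
  have hN0 : ∀ j ≤ J, ∀ ξ : ℝ, 0 ≤ N j ξ := by
    intro j hj ξ
    rcases le_or_gt 0 ξ with h | h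
    · exact intervalIntegral.integral_nonneg h fun s hs => hnsign j hj s hs.1
    · rw [hN]
      simp only
      rw [intervalIntegral.integral_symm, neg_nonneg]
      have : (∫ s in ξ..(0:ℝ), n j s) ≤ ∫ s in ξ..(0:ℝ), (0:ℝ) := by
        apply intervalIntegral.integral_mono_on h.le ((hnc j hj).intervalIntegrable _ _)
          intervalIntegrable_const
        intro s hs
        exact hnsign' j hj s hs.2
      simpa using this
  set E : (ℕ → ℝ) → ℝ := fun u =>
      (∑ j ∈ Finset.range (J+1), (a/2 * (u j)^2 - a * w j * (u j) + N j (u j)))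
        + κ/2 * ∑ j ∈ Finset.range J, (u (j+1) - u j)^2 with hE
  have hEc : Continuous E := by
    rw [hE]
    apply Continuous.add
    · apply continuous_finset_sum
      intro j hj
      have hjJ : j ≤ J := by have := Finset.mem_range.1 hj; omega
      exact ((continuous_const.mul ((continuous_apply j).pow 2)).sub
        (continuous_const.mul (continuous_apply j))).add ((hNc j hjJ).comp (continuous_apply j))
    · exact continuous_const.mul (continuous_finset_sum _ fun j _ =>
        ((continuous_apply (j+1)).sub (continuous_apply j)).pow 2)
  have hlb : ∀ u : ℕ → ℝ,
      (∑ j ∈ Finset.range (J+1), (a/2 * (u j)^2 - a * w j * (u j))) ≤ E u := by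
    intro u
    rw [hE]
    have h1 : (∑ j ∈ Finset.range (J+1), (a/2 * (u j)^2 - a * w j * (u j)))
        ≤ ∑ j ∈ Finset.range (J+1), (a/2 * (u j)^2 - a * w j * (u j) + N j (u j)) := by
      apply Finset.sum_le_sum
      intro j hj
      have hjJ : j ≤ J := by have := Finset.mem_range.1 hj; omega
      have := hN0 j hjJ (u j)
      linarith
    have h2 : 0 ≤ κ/2 * ∑ j ∈ Finset.range J, (u (j+1) - u j)^2 := by positivity
    linarith
  set C : ℝ := ∑ j ∈ Finset.range (J+1), a * |w j| with hC
  have hC0 : 0 ≤ C := Finset.sum_nonneg fun j _ => by positivity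
  have hlb2 : ∀ (u : ℕ → ℝ) (M : ℝ), 0 ≤ M → (∀ j ∈ Finset.range (J+1), |u j| ≤ M) →
      ∀ k ∈ Finset.range (J+1), a/2 * (u k)^2 - C * M ≤ E u := by
    intro u M hM hbd k hk
    have key : ∀ j ∈ Finset.range (J+1),
        (if j = k then a/2 * (u k)^2 else 0) - a * |w j| * M
          ≤ a/2 * (u j)^2 - a * w j * (u j) := by
      intro j hj
      have h2 : a * w j * (u j) ≤ a * |w j| * M := by
        have h3 : w j * u j ≤ |w j| * M := by
          calc w j * u j ≤ |w j * u j| := le_abs_self _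
          _ = |w j| * |u j| := abs_mul _ _
          _ ≤ |w j| * M := mul_le_mul_of_nonneg_left (hbd j hj) (abs_nonneg _)
        calc a * w j * (u j) = a * (w j * u j) := by ring
        _ ≤ a * (|w j| * M) := mul_le_mul_of_nonneg_left h3 haa.le
        _ = a * |w j| * M := by ring
      split_ifs with hjk
      · subst hjk; linarith
      · have : 0 ≤ a/2 * (u j)^2 := by positivity
        linarith
    have hsum := Finset.sum_le_sum key
    rw [Finset.sum_sub_distrib, Finset.sum_ite_eq' (Finset.range (J+1)) k
      (fun _ => a/2 * (u k)^2), if_pos hk, ← Finset.sum_mul] at hsum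
    have := hlb u
    rw [hC]
    linarith
  set ρ : ℝ := max 1 (2*C/a + 1) with hρ
  have hρ1 : (1:ℝ) ≤ ρ := le_max_left _ _
  have hρC : 2*C/a + 1 ≤ ρ := le_max_right _ _
  set K : Set (ℕ → ℝ) := Set.pi Set.univ
    (fun j => if j ≤ J then Set.Icc (-ρ) ρ else ({0} : Set ℝ)) with hK
  have hKc : IsCompact K := by
    apply isCompact_univ_pi
    intro j
    split_ifs
    · exact isCompact_Icc
    · exact isCompact_singleton
  have hzK : (fun _ : ℕ => (0:ℝ)) ∈ K := by
    rw [hK, Set.mem_univ_pi]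
    intro j
    split_ifs
    · exact ⟨by linarith, by linarith⟩
    · rfl
  have hEz : E (fun _ : ℕ => (0:ℝ)) = 0 := by
    rw [hE]
    simp [hN, intervalIntegral.integral_same]
  obtain ⟨v, hvK, hvmin⟩ := hKc.exists_isMinOn ⟨_, hzK⟩ hEc.continuousOn
  have hvmin' : ∀ u ∈ K, E v ≤ E u := fun u hu => hvmin hu
  rw [hK, Set.mem_univ_pi] at hvK
  have hvbd : ∀ j ≤ J, |v j| ≤ ρ := by
    intro j hj
    have := hvK j
    rw [if_pos hj] at this
    exact abs_le.2 this
  have hEvz : E v ≤ 0 := hEz ▸ hvmin' _ hzK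
  have hglobal : ∀ k ≤ J, ∀ t : ℝ, E v ≤ E (Function.update v k t) := by
    intro k hk t
    rcases le_or_gt |t| ρ with h | h
    · apply hvmin'
      rw [hK, Set.mem_univ_pi]
      intro j
      rcases eq_or_ne j k with rfl | hne
      · rw [Function.update_self, if_pos hk]
        exact abs_le.1 h
      · rw [Function.update_of_ne hne]
        exact hvK j
    · have hbd : ∀ j ∈ Finset.range (J+1), |Function.update v k t j| ≤ |t| := by
        intro j hj
        rcases eq_or_ne j k with rfl | hne
        · rw [Function.update_self]
        · rw [Function.update_of_ne hne]
          have hjJ : j ≤ J := by have := Finset.mem_range.1 hj; omega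
          exact le_trans (hvbd j hjJ) h.le
      have h1 := hlb2 (Function.update v k t) |t| (abs_nonneg t) hbd k
        (Finset.mem_range.2 (by omega))
      rw [Function.update_self] at h1
      have h2 : 2*C ≤ a * (|t| - 1) := by
        have : 2*C/a ≤ |t| - 1 := by linarith
        calc 2*C = (2*C/a) * a := by field_simp
        _ ≤ (|t| - 1) * a := mul_le_mul_of_nonneg_right this haa.le
        _ = a * (|t| - 1) := by ring
      have h3 : 0 < a/2 * t^2 - C * |t| := by
        have hsq : t^2 = |t| * |t| := by rw [abs_mul_abs_self]; ring
        have h1t : (1:ℝ) ≤ |t| := by linarith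
        nlinarith
      exact hEvz.trans (h3.le.trans h1)
  have hgrad : ∀ k, k ≤ J →
      a * v k - a * w k + n k (v k)
        + κ * ((if k < J then v k - v (k+1) else 0) + (if 1 ≤ k then v k - v (k-1) else 0)) = 0 := by
    intro k hk
    have hA : HasDerivAt (fun t => ∑ j ∈ Finset.range (J+1),
        (a/2 * (Function.update v k t j)^2 - a * w j * (Function.update v k t j)
          + N j (Function.update v k t j)))
        (a * v k - a * w k + n k (v k)) (v k) := by
      have h1 : HasDerivAt (fun t => ∑ j ∈ Finset.range (J+1),
          (a/2 * (Function.update v k t j)^2 - a * w j * (Function.update v k t j)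
            + N j (Function.update v k t j)))
          (∑ j ∈ Finset.range (J+1), (if j = k then a * v k - a * w k + n k (v k) else 0))
          (v k) := by
        apply HasDerivAt.fun_sum
        intro j hj
        rcases eq_or_ne j k with rfl | hne
        · simp only [if_pos rfl, ↓reduceIte]
          have heq : (fun t => a/2 * (Function.update v j t j)^2
              - a * w j * (Function.update v j t j) + N j (Function.update v j t j))
              = fun t => a/2 * t^2 - a * w j * t + N j t := by
            funext t; rw [Function.update_self]
          rw [heq]
          have hd := (((hasDerivAt_pow 2 (v j)).const_mul (a/2)).sub
            ((hasDerivAt_id' (v j)).const_mul (a * w j))).add (hNd j hk (v j))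
          exact hd.congr_deriv (by norm_num <;> ring)
        · have heq : (fun t => a/2 * (Function.update v k t j)^2
              - a * w j * (Function.update v k t j) + N j (Function.update v k t j))
              = fun _ => a/2 * (v j)^2 - a * w j * (v j) + N j (v j) := by
            funext t; rw [Function.update_of_ne hne]
          rw [heq, if_neg hne]
          exact hasDerivAt_const _ _
      rwa [Finset.sum_ite_eq' (Finset.range (J+1)) k _,
        if_pos (Finset.mem_range.2 (by omega))] at h1
    have hB : HasDerivAt (fun t => ∑ j ∈ Finset.range J,
        (Function.update v k t (j+1) - Function.update v k t j)^2)
        ((if k < J then 2*(v k - v (k+1)) else 0) + (if 1 ≤ k then 2*(v k - v (k-1)) else 0))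
        (v k) := by
      have h1 : HasDerivAt (fun t => ∑ j ∈ Finset.range J,
          (Function.update v k t (j+1) - Function.update v k t j)^2)
          (∑ j ∈ Finset.range J, ((if j = k then 2*(v k - v (k+1)) else 0)
            + (if j + 1 = k then 2*(v k - v (k-1)) else 0))) (v k) := by
        apply HasDerivAt.fun_sum
        intro j hj
        rcases eq_or_ne j k with rfl | hne
        · have heq : (fun t => (Function.update v j t (j+1) - Function.update v j t j)^2)
              = fun t => (v (j+1) - t)^2 := by
            funext t; rw [Function.update_self, Function.update_of_ne (by omega)]
          rw [heq, if_pos rfl, if_neg (by omega)]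
          have hd := ((hasDerivAt_const (v j) (v (j+1))).fun_sub (hasDerivAt_id' (v j))).fun_pow 2
          exact hd.congr_deriv (by norm_num <;> ring)
        · rcases eq_or_ne (j+1) k with hjk | hne2
          · have heq : (fun t => (Function.update v k t (j+1) - Function.update v k t j)^2)
                = fun t => (t - v j)^2 := by
              funext t; rw [hjk, Function.update_self, Function.update_of_ne hne]
            rw [heq, if_neg hne, if_pos hjk]
            have hd := ((hasDerivAt_id' (v k)).fun_sub (hasDerivAt_const (v k) (v j))).fun_pow 2
            have hj' : v j = v (k-1) := by rw [show k - 1 = j by omega]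
            exact hd.congr_deriv (by rw [hj']; norm_num <;> ring)
          · have heq : (fun t => (Function.update v k t (j+1) - Function.update v k t j)^2)
                = fun _ => (v (j+1) - v j)^2 := by
              funext t; rw [Function.update_of_ne hne2, Function.update_of_ne hne]
            rw [heq, if_neg hne, if_neg hne2]
            simp only [add_zero]
            exact hasDerivAt_const _ _
      rw [Finset.sum_add_distrib, Finset.sum_ite_eq' (Finset.range J) k _] at h1
      have h2 : (∑ j ∈ Finset.range J, if j + 1 = k then 2*(v k - v (k-1)) else 0)
          = if 1 ≤ k then 2*(v k - v (k-1)) else 0 := by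
        rcases Nat.eq_zero_or_pos k with rfl | hk1
        · simp
        · rw [if_pos (show 1 ≤ k from hk1), Finset.sum_eq_single (k-1)]
          · rw [if_pos (by omega)]
          · intro b _ hbne; rw [if_neg (by omega)]
          · intro habs; exact absurd (Finset.mem_range.2 (by omega)) habs
      rw [h2] at h1
      simp only [Finset.mem_range] at h1
      exact h1
    have hder : HasDerivAt (fun t => E (Function.update v k t))
        ((a * v k - a * w k + n k (v k))
          + κ/2 * ((if k < J then 2*(v k - v (k+1)) else 0)
            + (if 1 ≤ k then 2*(v k - v (k-1)) else 0))) (v k) := by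
      simp only [hE]
      exact hA.add (HasDerivAt.const_mul (κ/2) hB)
    have hloc : IsLocalMin (fun t => E (Function.update v k t)) (v k) := by
      apply Filter.Eventually.of_forall
      intro t
      have h0 := hglobal k hk t
      simpa [Function.update_eq_self] using h0
    have hz := hloc.deriv_eq_zero
    rw [hder.deriv] at hz
    split_ifs at hz ⊢ <;> linear_combination hz
  refine ⟨v, ?_⟩
  intro j hj
  have hg := hgrad j hj
  simp only [ha, hκ, hn] at hg
  rw [div_div_eq_mul_div, one_div, inv_pow, div_inv_eq_mul]
  rcases Nat.eq_zero_or_pos j with rfl | hj1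
  · rw [show min (0+1) J = 1 from by omega, show (0:ℕ) - 1 = 0 from rfl]
    rw [if_pos (show 0 < J by omega), if_neg (by omega)] at hg
    push_cast at hg ⊢
    linear_combination -hg
  · rcases eq_or_ne j J with heq | hne
    · rw [show min (j+1) J = j from by omega]
      rw [if_neg (by omega), if_pos (by omega)] at hg
      linear_combination -hg
    · rw [show min (j+1) J = j+1 from by omega]
      rw [if_pos (by omega), if_pos (by omega)] at hg
      linear_combination -hg

lemma level_pos (T σ : ℝ) (hT : 0 < T) (hσ : 0 < σ) (I J : ℕ) (hI : 1 ≤ I) (hJ : 1 ≤ J)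
    (f : ℝ → ℝ → ℝ) (hfneg : ∀ x ∈ Set.Icc (0:ℝ) 1, ∀ ξ : ℝ, f x ξ ≤ 0)
    (c w v : ℕ → ℝ) (hw : ∀ j ≤ J, 0 < w j) (hv : LEq T σ I J f c w v) :
    ∀ j ≤ J, 0 < v j := by
  have hI0 : (0:ℝ) < I := by exact_mod_cast Nat.pos_of_ne_zero (by omega)
  obtain ⟨k, hkmem, hkmin⟩ := Finset.exists_min_image (Finset.range (J+1)) v
    ⟨0, Finset.mem_range.2 (by omega)⟩
  have hkJ : k ≤ J := by have := Finset.mem_range.1 hkmem; omega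
  have main : 0 < v k := by
    by_contra hvk
    push_neg at hvk
    have e := hv k hkJ
    have h1 : 0 < (w k - v k) / (T / (I:ℝ)) := by
      apply div_pos (by linarith [hw k hkJ]) (div_pos hT hI0)
    have hmin1 : v k ≤ v (min (k+1) J) :=
      hkmin _ (Finset.mem_range.2 (by omega))
    have hmin2 : v k ≤ v (k-1) := hkmin _ (Finset.mem_range.2 (by omega))
    have h2 : 0 ≤ σ^2 / 2 * ((v (min (k+1) J) - 2 * v k + v (k-1)) / (1/(J:ℝ))^2) := by
      apply mul_nonneg (by positivity)
      apply div_nonneg (by linarith) (by positivity)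
    have h3 : -(1/σ^2) * f ((k:ℝ)/(J:ℝ)) (v k * c k) * v k ≤ 0 := by
      have hf := hfneg _ (xmem hJ hkJ) (v k * c k)
      have : 0 ≤ f ((k:ℝ)/(J:ℝ)) (v k * c k) * v k := mul_nonneg_of_nonpos_of_nonpos hf hvk
      have hσ2 : 0 < (1:ℝ)/σ^2 := by positivity
      nlinarith
    linarith
  intro j hj
  exact lt_of_lt_of_le main (hkmin j (Finset.mem_range.2 (by omega)))

lemma level_le (T σ : ℝ) (hT : 0 < T) (hσ : 0 < σ) (I J : ℕ) (hI : 1 ≤ I) (hJ : 1 ≤ J)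
    (f : ℝ → ℝ → ℝ) (hfneg : ∀ x ∈ Set.Icc (0:ℝ) 1, ∀ ξ : ℝ, f x ξ ≤ 0)
    (hfmono : ∀ x ∈ Set.Icc (0:ℝ) 1, Antitone (f x))
    (c w v v' : ℕ → ℝ) (hc : ∀ j ≤ J, 0 ≤ c j)
    (hvpos : ∀ j ≤ J, 0 < v j) (hv'pos : ∀ j ≤ J, 0 < v' j)
    (hv : LEq T σ I J f c w v) (hv' : LEq T σ I J f c w v') :
    ∀ j ≤ J, v j ≤ v' j := by
  have hI0 : (0:ℝ) < I := by exact_mod_cast Nat.pos_of_ne_zero (by omega)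
  obtain ⟨k, hkmem, hkmax⟩ := Finset.exists_max_image (Finset.range (J+1)) (fun j => v j - v' j)
    ⟨0, Finset.mem_range.2 (by omega)⟩
  have hkJ : k ≤ J := by have := Finset.mem_range.1 hkmem; omega
  have main : v k - v' k ≤ 0 := by
    by_contra hd
    push_neg at hd
    have e1 := hv k hkJ
    have e2 := hv' k hkJ
    have e3 : (v' k - v k) / (T / (I:ℝ))
        + σ^2 / 2 * (((v (min (k+1) J) - v' (min (k+1) J)) - 2*(v k - v' k) + (v (k-1) - v' (k-1))) / (1/(J:ℝ))^2)
        = -(1/σ^2) * f ((k:ℝ)/(J:ℝ)) (v k * c k) * v k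
          - (-(1/σ^2) * f ((k:ℝ)/(J:ℝ)) (v' k * c k) * v' k) := by
      linear_combination e1 - e2
    have h1 : (v' k - v k) / (T / (I:ℝ)) < 0 :=
      div_neg_of_neg_of_pos (by linarith) (div_pos hT hI0)
    have hmax1 : v (min (k+1) J) - v' (min (k+1) J) ≤ v k - v' k :=
      hkmax _ (Finset.mem_range.2 (by omega))
    have hmax2 : v (k-1) - v' (k-1) ≤ v k - v' k := hkmax _ (Finset.mem_range.2 (by omega))
    have h2 : σ^2 / 2 * (((v (min (k+1) J) - v' (min (k+1) J)) - 2*(v k - v' k) + (v (k-1) - v' (k-1))) / (1/(J:ℝ))^2) ≤ 0 := by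
      apply mul_nonpos_of_nonneg_of_nonpos (by positivity)
      apply div_nonpos_of_nonpos_of_nonneg (by linarith) (by positivity)
    -- RHS difference is nonnegative
    have hx := xmem hJ hkJ
    have hA : f ((k:ℝ)/(J:ℝ)) (v k * c k) ≤ f ((k:ℝ)/(J:ℝ)) (v' k * c k) := by
      apply hfmono _ hx
      apply mul_le_mul_of_nonneg_right (by linarith) (hc k hkJ)
    have hAneg : f ((k:ℝ)/(J:ℝ)) (v k * c k) ≤ 0 := hfneg _ hx _
    have hprod : f ((k:ℝ)/(J:ℝ)) (v k * c k) * v k - f ((k:ℝ)/(J:ℝ)) (v' k * c k) * v' k ≤ 0 := by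
      have h5 : 0 < v' k := hv'pos k hkJ
      nlinarith
    have hσ2 : 0 < (1:ℝ)/σ^2 := by positivity
    have h3 : 0 ≤ -(1/σ^2) * f ((k:ℝ)/(J:ℝ)) (v k * c k) * v k
          - (-(1/σ^2) * f ((k:ℝ)/(J:ℝ)) (v' k * c k) * v' k) := by nlinarith
    linarith
  intro j hj
  have := hkmax j (Finset.mem_range.2 (by omega))
  linarith


theorem stmt_1 (T σ : ℝ) (hT : 0 < T) (hσ : 0 < σ)
    (I J : ℕ) (hI : 1 ≤ I) (hJ : 1 ≤ J)
    (f : ℝ → ℝ → ℝ) (uT m0 : ℝ → ℝ)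
    (hfc : ∀ x ∈ Set.Icc (0:ℝ) 1, Continuous (f x))
    (hfb : ∃ B : ℝ, ∀ x ∈ Set.Icc (0:ℝ) 1, ∀ ξ : ℝ, |f x ξ| ≤ B)
    (hfneg : ∀ x ∈ Set.Icc (0:ℝ) 1, ∀ ξ : ℝ, f x ξ ≤ 0)
    (hfmono : ∀ x ∈ Set.Icc (0:ℝ) 1, Antitone (f x))
    (huTb : ∃ B : ℝ, ∀ x ∈ Set.Icc (0:ℝ) 1, |uT x| ≤ B)
    (hm0b : ∃ B : ℝ, ∀ x ∈ Set.Icc (0:ℝ) 1, |m0 x| ≤ B)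
    (hm0 : ∀ x ∈ Set.Icc (0:ℝ) 1, 0 ≤ m0 x)
    (ψ : ℕ → ℕ → ℝ) (hψ : MemM I J 0 ψ) :
    ∃ φ : ℕ → ℕ → ℝ, BScheme T σ I J f uT ψ φ ∧
      ∀ φ' : ℕ → ℕ → ℝ, BScheme T σ I J f uT ψ φ' →
        ∀ i ≤ I, ∀ j ≤ J, φ' i j = φ i j := by
  have hex : ∀ (i : ℕ) (r : ℕ → ℝ), ∃ v : ℕ → ℝ, LEq T σ I J f (ψ i) r v :=
    fun i r => level_exists T σ hT hσ I J hI hJ f hfc hfneg (ψ i) r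
  choose sol hsol using hex
  set trm : ℕ → ℝ := fun j => Real.exp (uT ((j:ℝ)/(J:ℝ)) / σ^2) with htrm
  set rows : ℕ → (ℕ → ℝ) := fun k => Nat.rec trm (fun k r => sol (I - k - 1) r) k with hrows
  have hrows0 : rows 0 = trm := rfl
  have hrowsS : ∀ k, rows (k+1) = sol (I - k - 1) (rows k) := fun k => rfl
  have hpos : ∀ k, ∀ j ≤ J, 0 < rows k j := by
    intro k
    induction k with
    | zero => intro j hj; exact Real.exp_pos _
    | succ k ih =>
      rw [hrowsS k]
      exact level_pos T σ hT hσ I J hI hJ f hfneg (ψ (I - k - 1)) (rows k) _ ih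
        (hsol (I - k - 1) (rows k))
  refine ⟨fun i => rows (I - i), ⟨?_, ?_⟩, ?_⟩
  · intro i hi j hj
    have e1 : I - (i + 1) = I - i - 1 := by omega
    have e2 : rows (I - i) = sol i (rows (I - i - 1)) := by
      conv_lhs => rw [show I - i = (I - i - 1) + 1 from by omega]
      rw [hrowsS, show I - (I - i - 1) - 1 = i from by omega]
    simp only [e1, e2]
    exact hsol i (rows (I - i - 1)) j hj
  · intro j hj
    simp only [Nat.sub_self]
    rfl
  · intro φ' hφ' i hi j hj
    have key : ∀ k, k ≤ I → ∀ j ≤ J, φ' (I - k) j = rows k j := by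
      intro k
      induction k with
      | zero =>
        intro _ j hj
        simpa [Nat.sub_zero, hrows0, htrm] using hφ'.2 j hj
      | succ k ih =>
        intro hk j hj
        have hik : I - (k+1) < I := by omega
        have hstep : I - (k+1) + 1 = I - k := by omega
        have h1 : LEq T σ I J f (ψ (I - (k+1))) (φ' (I - k)) (φ' (I - (k+1))) := by
          intro j' hj'
          have := hφ'.1 (I - (k+1)) hik j' hj'
          rwa [hstep] at this
        have h2 : LEq T σ I J f (ψ (I - (k+1))) (rows k) (φ' (I - (k+1))) := by
          intro j' hj'
          have h := h1 j' hj'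
          rwa [ih (by omega) j' hj'] at h
        have h3 : LEq T σ I J f (ψ (I - (k+1))) (rows k) (rows (k+1)) := by
          have := hsol (I - k - 1) (rows k)
          have hik2 : I - k - 1 = I - (k+1) := by omega
          rw [hik2] at this
          rw [hrowsS, hik2]
          exact this
        have hc : ∀ j' ≤ J, 0 ≤ ψ (I - (k+1)) j' := fun j' hj' => hψ _ (by omega) j' hj'
        have hppos : ∀ j' ≤ J, 0 < φ' (I - (k+1)) j' :=
          level_pos T σ hT hσ I J hI hJ f hfneg _ _ _ (hpos k) h2
        have hrpos : ∀ j' ≤ J, 0 < rows (k+1) j' := hpos (k+1)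
        have hle1 := level_le T σ hT hσ I J hI hJ f hfneg hfmono _ _ _ _ hc hppos hrpos h2 h3
        have hle2 := level_le T σ hT hσ I J hI hJ f hfneg hfmono _ _ _ _ hc hrpos hppos h3 h2
        exact le_antisymm (hle1 j hj) (hle2 j hj)
    have h := key (I - i) (by omega) j hj
    rwa [show I - (I - i) = i from by omega] at h
end
end

section
/- For every ψ̂ ∈ M_0, the unique solution φ̂ of the discrete backward scheme (Ê_φ) with data ψ̂ satisfies, for all 0 ≤ i ≤ I and 0 ≤ j ≤ J, φ̂_{i,j} ≥ exp(−‖u_T‖_∞/σ²) · (1 + Δt ‖f‖_∞/σ²)^{−(I−i)} ≥ ε, where ε := exp(−(‖u_T‖_∞ + ‖f‖_∞ T)/σ²). In particular Φ̂(ψ̂) ∈ M_ε. -/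
noncomputable section

open Real Filter

theorem stmt_2 (T σ : ℝ) (hT : 0 < T) (hσ : 0 < σ)
    (I J : ℕ) (hI : 1 ≤ I) (hJ : 1 ≤ J)
    (f : ℝ → ℝ → ℝ) (uT m0 : ℝ → ℝ)
    (hfc : ∀ x ∈ Set.Icc (0:ℝ) 1, Continuous (f x))
    (hfb : ∃ B : ℝ, ∀ x ∈ Set.Icc (0:ℝ) 1, ∀ ξ : ℝ, |f x ξ| ≤ B)
    (hfneg : ∀ x ∈ Set.Icc (0:ℝ) 1, ∀ ξ : ℝ, f x ξ ≤ 0)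
    (hfmono : ∀ x ∈ Set.Icc (0:ℝ) 1, Antitone (f x))
    (huTb : ∃ B : ℝ, ∀ x ∈ Set.Icc (0:ℝ) 1, |uT x| ≤ B)
    (hm0b : ∃ B : ℝ, ∀ x ∈ Set.Icc (0:ℝ) 1, |m0 x| ≤ B)
    (hm0 : ∀ x ∈ Set.Icc (0:ℝ) 1, 0 ≤ m0 x)
    (ψ : ℕ → ℕ → ℝ) (hψ : MemM I J 0 ψ)
    (φ : ℕ → ℕ → ℝ) (hφ : BScheme T σ I J f uT ψ φ) :
    (∀ i ≤ I, ∀ j ≤ J,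
        Real.exp (-(supIcc uT) / σ^2) / (1 + (T/(I:ℝ)) * supF f / σ^2) ^ (I - i) ≤ φ i j)
    ∧ (∀ i ≤ I,
        Real.exp (-(supIcc uT + supF f * T) / σ^2)
          ≤ Real.exp (-(supIcc uT) / σ^2) / (1 + (T/(I:ℝ)) * supF f / σ^2) ^ (I - i))
    ∧ MemM I J (Real.exp (-(supIcc uT + supF f * T) / σ^2)) φ := by
  obtain ⟨hsch, hterm⟩ := hφ
  have hσ2 : (0:ℝ) < σ^2 := by positivity
  have hIpos : (0:ℝ) < I := by exact_mod_cast Nat.lt_of_lt_of_le Nat.zero_lt_one hI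
  have hJpos : (0:ℝ) < J := by exact_mod_cast Nat.lt_of_lt_of_le Nat.zero_lt_one hJ
  have hΔt : (0:ℝ) < T / I := div_pos hT hIpos
  haveI hneS : Nonempty (Set.Icc (0:ℝ) 1) := ⟨⟨0, by constructor <;> norm_num⟩⟩
  -- bounds from the sup norms
  have hU : ∀ x ∈ Set.Icc (0:ℝ) 1, |uT x| ≤ supIcc uT := by
    obtain ⟨B, hB⟩ := huTb
    intro x hx
    exact le_ciSup (f := fun x : Set.Icc (0:ℝ) 1 => |uT (x:ℝ)|)
      ⟨B, by rintro y ⟨z, rfl⟩; exact hB z z.2⟩ ⟨x, hx⟩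
  have hFb : ∀ x ∈ Set.Icc (0:ℝ) 1, ∀ ξ : ℝ, |f x ξ| ≤ supF f := by
    obtain ⟨B, hB⟩ := hfb
    intro x hx ξ
    exact le_ciSup (f := fun p : Set.Icc (0:ℝ) 1 × ℝ => |f (p.1:ℝ) p.2|)
      ⟨B, by rintro y ⟨p, rfl⟩; exact hB p.1 p.1.2 p.2⟩ (⟨x, hx⟩, ξ)
  have hF0 : 0 ≤ supF f :=
    le_trans (abs_nonneg _) (hFb 0 (by constructor <;> norm_num) 0)
  set S := supIcc uT with hSdef
  set F := supF f with hFdef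
  set a := (T/(I:ℝ)) * F / σ^2 with hadef
  set c := Real.exp (-S / σ^2) with hcdef
  have ha0 : 0 ≤ a := by positivity
  have hc0 : (0:ℝ) < c := Real.exp_pos _
  clear_value S F a c
  have h1a : (1:ℝ) ≤ 1 + a := by linarith
  have h1apos : (0:ℝ) < 1 + a := by linarith
  have hx : ∀ j ≤ J, (j:ℝ)/(J:ℝ) ∈ Set.Icc (0:ℝ) 1 := by
    intro j hj
    constructor
    · positivity
    · rw [div_le_one hJpos]; exact_mod_cast hj
  -- main induction
  have key : ∀ k, k ≤ I → ∀ j ≤ J, c / (1+a)^k ≤ φ (I - k) j := by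
    intro k
    induction k with
    | zero =>
      intro _ j hj
      simp only [pow_zero, div_one, Nat.sub_zero]
      rw [hterm j hj, hcdef]
      apply Real.exp_le_exp.mpr
      have h1 : -S ≤ uT ((j:ℝ)/(J:ℝ)) :=
        neg_le_of_abs_le (hU _ (hx j hj))
      exact div_le_div_of_nonneg_right h1 hσ2.le |>.trans_eq rfl
    | succ k ih =>
      intro hk j hj
      have hkI : k ≤ I := Nat.le_of_succ_le hk
      set i := I - (k+1) with hidef
      have hiI : i < I := by omega
      have hi1 : i + 1 = I - k := by omega
      obtain ⟨j', hj'mem, hj'min⟩ :=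
        Finset.exists_min_image (Finset.range (J+1)) (fun j => φ i j) ⟨0, by simp⟩
      have hj'J : j' ≤ J := Nat.lt_succ_iff.mp (Finset.mem_range.mp hj'mem)
      have heq := hsch i hiI j' hj'J
      have hL : 0 ≤ φ i (min (j'+1) J) - 2 * φ i j' + φ i (j'-1) := by
        have h1 := hj'min (min (j'+1) J) (Finset.mem_range.mpr (by omega))
        have h2 := hj'min (j'-1) (Finset.mem_range.mpr (by omega))
        linarith
      have hprev : c/(1+a)^k ≤ φ (i+1) j' := by
        rw [hi1]; exact ih hkI j' hj'J
      have hprevpos : 0 < φ (i+1) j' := lt_of_lt_of_le (div_pos hc0 (pow_pos h1apos k)) hprev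
      set ff := f ((j':ℝ)/(J:ℝ)) (φ i j' * ψ i j') with hffdef
      have hffS : |ff| ≤ F := hFb _ (hx j' hj'J) _
      have hffneg : ff ≤ 0 := hfneg _ (hx j' hj'J) _
      set k0 := 1 - (T/(I:ℝ)) * ff / σ^2 with hk0def
      clear_value ff k0
      have hk01 : (1:ℝ) ≤ k0 := by
        have h1 : (T/(I:ℝ)) * ff ≤ 0 := mul_nonpos_of_nonneg_of_nonpos hΔt.le hffneg
        have h2 : (T/(I:ℝ)) * ff / σ^2 ≤ 0 := div_nonpos_of_nonpos_of_nonneg h1 hσ2.le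
        linarith
      have hk0pos : (0:ℝ) < k0 := lt_of_lt_of_le one_pos hk01
      have hk0a : k0 ≤ 1 + a := by
        have h1 : -F ≤ ff := neg_le_of_abs_le hffS
        have h2 : (T/(I:ℝ)) * (-F) / σ^2 ≤ (T/(I:ℝ)) * ff / σ^2 := by gcongr
        have h3 : (T/(I:ℝ)) * (-F) / σ^2 = -a := by rw [hadef]; ring
        linarith
      -- from the scheme : φ (i+1) j' ≤ φ i j' * k0
      have hΔx2 : (0:ℝ) < (1/(J:ℝ))^2 := by positivity
      have hLap : 0 ≤ σ^2/2 * ((φ i (min (j'+1) J) - 2 * φ i j' + φ i (j'-1)) / (1/(J:ℝ))^2) :=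
        mul_nonneg (by positivity) (div_nonneg hL hΔx2.le)
      have h1 : (φ (i+1) j' - φ i j') / (T/(I:ℝ)) ≤ -(1/σ^2) * ff * φ i j' := by
        linarith [heq]
      rw [div_le_iff₀ hΔt] at h1
      have hstep : φ (i+1) j' ≤ φ i j' * k0 := by
        have hr : φ i j' * k0 = φ i j' + (-(1/σ^2) * ff * φ i j') * (T/(I:ℝ)) := by
          rw [hk0def]; field_simp; ring
        linarith
      have h4 : φ (i+1) j' / k0 ≤ φ i j' := (div_le_iff₀ hk0pos).mpr hstep
      have h5 : φ (i+1) j' / (1+a) ≤ φ (i+1) j' / k0 := by gcongr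
      have h6 : c/(1+a)^(k+1) ≤ φ (i+1) j' / (1+a) := by
        rw [pow_succ, ← div_div]
        gcongr
      have h7 : φ i j' ≤ φ i j := hj'min j (Finset.mem_range.mpr (by omega))
      linarith
  have hA : ∀ i ≤ I, ∀ j ≤ J, c / (1+a)^(I-i) ≤ φ i j := by
    intro i hi j hj
    have h := key (I - i) (Nat.sub_le I i) j hj
    rwa [Nat.sub_sub_self hi] at h
  have hB : ∀ i ≤ I, Real.exp (-(S + F * T) / σ^2) ≤ c / (1+a)^(I-i) := by
    intro i hi
    have hIne : (I:ℝ) ≠ 0 := ne_of_gt hIpos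
    have h1 : (1+a)^(I-i) ≤ Real.exp (F * T / σ^2) := by
      calc (1+a)^(I-i) ≤ (1+a)^I := pow_le_pow_right₀ h1a (Nat.sub_le I i)
        _ ≤ (Real.exp a)^I := by
            apply pow_le_pow_left₀ h1apos.le
            linarith [Real.add_one_le_exp a]
        _ = Real.exp ((I:ℝ) * a) := by rw [← Real.exp_nat_mul]
        _ = Real.exp (F * T / σ^2) := by
            congr 1
            rw [hadef]; field_simp
    have h2 : c / Real.exp (F * T / σ^2) ≤ c / (1+a)^(I-i) := by
      gcongr
    have h3 : Real.exp (-(S + F * T) / σ^2) = c / Real.exp (F * T / σ^2) := by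
      rw [hcdef, ← Real.exp_sub]
      congr 1
      field_simp
      try ring
    rw [h3]; exact h2
  refine ⟨hA, hB, ?_⟩
  intro i hi j hj
  exact le_trans (hB i hi) (hA i hi j hj)
end
end

section
/- Discrete maximum principle: let ψ̂ ∈ M_0 and ϕ̂ ∈ M be arbitrary grid functions, and suppose φ̂ ∈ M satisfies the linear scheme (φ̂_{i+1,j} − φ̂_{i,j})/Δt + (σ²/2)(φ̂_{i,j+1} − 2φ̂_{i,j} + φ̂_{i,j-1})/(Δx)² = −(1/σ²) f(x_j, ϕ̂_{i,j} ψ̂_{i,j}) φ̂_{i,j} for all 0 ≤ i ≤ I−1 and 0 ≤ j ≤ J, with φ̂_{I,j} ≥ 0 for all j. Then 0 ≤ φ̂_{i,j} ≤ max_{0≤j'≤J} φ̂_{I,j'} for all 0 ≤ i ≤ I and 0 ≤ j ≤ J. -/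
noncomputable section

open Real Filter

theorem stmt_3 (T σ : ℝ) (hT : 0 < T) (hσ : 0 < σ)
    (I J : ℕ) (hI : 1 ≤ I) (hJ : 1 ≤ J)
    (f : ℝ → ℝ → ℝ)
    (hfc : ∀ x ∈ Set.Icc (0:ℝ) 1, Continuous (f x))
    (hfb : ∃ B : ℝ, ∀ x ∈ Set.Icc (0:ℝ) 1, ∀ ξ : ℝ, |f x ξ| ≤ B)
    (hfneg : ∀ x ∈ Set.Icc (0:ℝ) 1, ∀ ξ : ℝ, f x ξ ≤ 0)
    (hfmono : ∀ x ∈ Set.Icc (0:ℝ) 1, Antitone (f x))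
    (ψ : ℕ → ℕ → ℝ) (hψ : MemM I J 0 ψ)
    (ϕ φ : ℕ → ℕ → ℝ)
    (hsch : ∀ i < I, ∀ j ≤ J,
      (φ (i+1) j - φ i j) / (T / (I:ℝ))
        + σ^2 / 2 * ((φ i (min (j+1) J) - 2 * φ i j + φ i (j-1)) / (1/(J:ℝ))^2)
      = -(1/σ^2) * f ((j:ℝ)/(J:ℝ)) (ϕ i j * ψ i j) * φ i j)
    (hterm : ∀ j ≤ J, 0 ≤ φ I j) :
    ∀ i ≤ I, ∀ j ≤ J, 0 ≤ φ i j ∧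
      φ i j ≤ (Finset.range (J+1)).sup'
        (Finset.nonempty_range_iff.mpr (Nat.succ_ne_zero J)) (fun j' => φ I j') := by
  
  classical
  have hJR : (0:ℝ) < (J:ℝ) := by exact_mod_cast Nat.lt_of_lt_of_le Nat.zero_lt_one hJ
  have hIR : (0:ℝ) < (I:ℝ) := by exact_mod_cast Nat.lt_of_lt_of_le Nat.zero_lt_one hI
  have hdt : 0 < T / (I:ℝ) := div_pos hT hIR
  have hdx : (0:ℝ) < (1/(J:ℝ))^2 := by positivity
  have hx : ∀ j ≤ J, ((j:ℝ)/(J:ℝ)) ∈ Set.Icc (0:ℝ) 1 := by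
    intro j hj
    constructor
    · positivity
    · rw [div_le_one hJR]; exact_mod_cast hj
  set M : ℝ := (Finset.range (J+1)).sup'
    (Finset.nonempty_range_iff.mpr (Nat.succ_ne_zero J)) (fun j' => φ I j') with hM
  have hk : ∀ i j, j ≤ J → 0 ≤ -(1/σ^2) * f ((j:ℝ)/(J:ℝ)) (ϕ i j * ψ i j) := by
    intro i j hj
    have h1 := hfneg _ (hx j hj) (ϕ i j * ψ i j)
    have h2 : (0:ℝ) < 1/σ^2 := by positivity
    nlinarith
  have step : ∀ i < I, (∀ j ≤ J, 0 ≤ φ (i+1) j ∧ φ (i+1) j ≤ M) →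
      ∀ j ≤ J, 0 ≤ φ i j ∧ φ i j ≤ M := by
    intro i hi hnext
    obtain ⟨j0, hj0mem, hj0min⟩ := Finset.exists_min_image (Finset.range (J+1)) (φ i)
      (Finset.nonempty_range_iff.mpr (Nat.succ_ne_zero J))
    obtain ⟨j1, hj1mem, hj1max⟩ := Finset.exists_max_image (Finset.range (J+1)) (φ i)
      (Finset.nonempty_range_iff.mpr (Nat.succ_ne_zero J))
    have hj0 : j0 ≤ J := Nat.lt_succ_iff.mp (Finset.mem_range.mp hj0mem)
    have hj1 : j1 ≤ J := Nat.lt_succ_iff.mp (Finset.mem_range.mp hj1mem)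
    have hmin : ∀ j ≤ J, φ i j0 ≤ φ i j := fun j hj =>
      hj0min j (Finset.mem_range.mpr (Nat.lt_succ_of_le hj))
    have hmax : ∀ j ≤ J, φ i j ≤ φ i j1 := fun j hj =>
      hj1max j (Finset.mem_range.mpr (Nat.lt_succ_of_le hj))
    have hnn : 0 ≤ φ i j0 := by
      by_contra h
      push_neg at h
      have E := hsch i hi j0 hj0
      have hn : 0 ≤ φ i (min (j0+1) J) - 2 * φ i j0 + φ i (j0-1) := by
        have h1 := hmin (min (j0+1) J) (min_le_right _ _)
        have h2 := hmin (j0-1) (le_trans (Nat.sub_le _ _) hj0)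
        linarith
      have hDif : 0 ≤ σ^2/2 * ((φ i (min (j0+1) J) - 2 * φ i j0 + φ i (j0-1)) / (1/(J:ℝ))^2) :=
        mul_nonneg (by positivity) (div_nonneg hn hdx.le)
      have hRHS : -(1/σ^2) * f ((j0:ℝ)/(J:ℝ)) (ϕ i j0 * ψ i j0) * φ i j0 ≤ 0 :=
        mul_nonpos_of_nonneg_of_nonpos (hk i j0 hj0) h.le
      have hq : (φ (i+1) j0 - φ i j0) / (T/(I:ℝ)) ≤ 0 := by linarith
      have hsub : φ (i+1) j0 - φ i j0 ≤ 0 := by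
        by_contra hc
        push_neg at hc
        exact absurd (div_pos hc hdt) (not_lt.mpr hq)
      have := (hnext j0 hj0).1
      linarith
    have hub : φ i j1 ≤ M := by
      have E := hsch i hi j1 hj1
      have hn : φ i (min (j1+1) J) - 2 * φ i j1 + φ i (j1-1) ≤ 0 := by
        have h1 := hmax (min (j1+1) J) (min_le_right _ _)
        have h2 := hmax (j1-1) (le_trans (Nat.sub_le _ _) hj1)
        linarith
      have hDif : σ^2/2 * ((φ i (min (j1+1) J) - 2 * φ i j1 + φ i (j1-1)) / (1/(J:ℝ))^2) ≤ 0 :=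
        mul_nonpos_of_nonneg_of_nonpos (by positivity) (div_nonpos_of_nonpos_of_nonneg hn hdx.le)
      have hnn1 : 0 ≤ φ i j1 := le_trans hnn (hmin j1 hj1)
      have hRHS : 0 ≤ -(1/σ^2) * f ((j1:ℝ)/(J:ℝ)) (ϕ i j1 * ψ i j1) * φ i j1 :=
        mul_nonneg (hk i j1 hj1) hnn1
      have hq : 0 ≤ (φ (i+1) j1 - φ i j1) / (T/(I:ℝ)) := by linarith
      have hsub : 0 ≤ φ (i+1) j1 - φ i j1 := by
        by_contra hc
        push_neg at hc
        have : (φ (i+1) j1 - φ i j1) / (T/(I:ℝ)) < 0 := div_neg_of_neg_of_pos (by linarith) hdt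
        linarith
      have := (hnext j1 hj1).2
      linarith
    intro j hj
    exact ⟨le_trans hnn (hmin j hj), le_trans (hmax j hj) hub⟩
  have main : ∀ d, d ≤ I → ∀ j ≤ J, 0 ≤ φ (I-d) j ∧ φ (I-d) j ≤ M := by
    intro d
    induction d with
    | zero =>
      intro _ j hj
      refine ⟨by simpa using hterm j hj, ?_⟩
      rw [Nat.sub_zero, hM]
      exact Finset.le_sup' (fun j' => φ I j')
        (Finset.mem_range.mpr (Nat.lt_succ_of_le hj))
    | succ d ih =>
      intro hd
      have hdI : d ≤ I := le_of_lt (Nat.lt_of_succ_le hd)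
      have hlt : I - (d+1) < I := by omega
      have heq : I - (d+1) + 1 = I - d := by omega
      exact step (I-(d+1)) hlt (by rw [heq]; exact ih hdI)
  intro i hi j hj
  have h := main (I-i) (Nat.sub_le I i) j hj
  rwa [Nat.sub_sub_self hi] at h
end
end

section
/- Monotonicity of the discrete backward map: for all ψ̂₁, ψ̂₂ ∈ M_0 with ψ̂₁_{i,j} ≤ ψ̂₂_{i,j} for all i,j, one has Φ̂(ψ̂₁)_{i,j} ≥ Φ̂(ψ̂₂)_{i,j} for all i,j. -/
noncomputable section

open Real Filter

private lemma xj_mem (J : ℕ) (hJ : 1 ≤ J) {j : ℕ} (hj : j ≤ J) :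
    (j:ℝ)/(J:ℝ) ∈ Set.Icc (0:ℝ) 1 := by
  have hJ0 : (0:ℝ) < (J:ℝ) := by exact_mod_cast hJ
  constructor
  · positivity
  · rw [div_le_one hJ0]; exact_mod_cast hj

private lemma pos_step (T σ : ℝ) (hT : 0 < T) (hσ : 0 < σ)
    (I J : ℕ) (hI : 1 ≤ I) (hJ : 1 ≤ J)
    (f : ℝ → ℝ → ℝ)
    (hfneg : ∀ x ∈ Set.Icc (0:ℝ) 1, ∀ ξ : ℝ, f x ξ ≤ 0)
    (ψ φ : ℕ → ℕ → ℝ) (i : ℕ)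
    (heq : ∀ j ≤ J,
      (φ (i+1) j - φ i j) / (T / (I:ℝ))
        + σ^2 / 2 * ((φ i (min (j+1) J) - 2 * φ i j + φ i (j-1)) / (1/(J:ℝ))^2)
      = -(1/σ^2) * f ((j:ℝ)/(J:ℝ)) (φ i j * ψ i j) * φ i j)
    (hpos : ∀ j ≤ J, 0 < φ (i+1) j) :
    ∀ j ≤ J, 0 < φ i j := by
  obtain ⟨j₀, hj₀mem, hmin⟩ := Finset.exists_min_image (Finset.range (J+1)) (φ i)
    ⟨0, Finset.mem_range.mpr (Nat.succ_pos J)⟩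
  have hj₀ : j₀ ≤ J := Nat.lt_succ_iff.mp (Finset.mem_range.mp hj₀mem)
  suffices h : 0 < φ i j₀ by
    intro j hj
    exact lt_of_lt_of_le h (hmin j (Finset.mem_range.mpr (Nat.lt_succ_of_le hj)))
  by_contra hB
  push_neg at hB
  have hJ0 : (0:ℝ) < (J:ℝ) := by exact_mod_cast hJ
  have hI0 : (0:ℝ) < (I:ℝ) := by exact_mod_cast hI
  have hdt : 0 < T / (I:ℝ) := div_pos hT hI0
  have hdx2 : 0 < (1/(J:ℝ))^2 := by positivity
  have E := heq j₀ hj₀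
  have hF : f ((j₀:ℝ)/(J:ℝ)) (φ i j₀ * ψ i j₀) ≤ 0 := hfneg _ (xj_mem J hJ hj₀) _
  have hnb1 : φ i j₀ ≤ φ i (min (j₀+1) J) :=
    hmin _ (Finset.mem_range.mpr (Nat.lt_succ_of_le (min_le_right _ _)))
  have hnb2 : φ i j₀ ≤ φ i (j₀-1) :=
    hmin _ (Finset.mem_range.mpr (Nat.lt_succ_of_le (le_trans (Nat.sub_le _ _) hj₀)))
  have h1 : 0 < (φ (i+1) j₀ - φ i j₀) / (T / (I:ℝ)) :=
    div_pos (by linarith [hpos j₀ hj₀]) hdt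
  have h2 : 0 ≤ σ^2 / 2 * ((φ i (min (j₀+1) J) - 2 * φ i j₀ + φ i (j₀-1)) / (1/(J:ℝ))^2) :=
    mul_nonneg (by positivity) (div_nonneg (by linarith) hdx2.le)
  have hs : 0 < 1/σ^2 := by positivity
  have hFB : 0 ≤ f ((j₀:ℝ)/(J:ℝ)) (φ i j₀ * ψ i j₀) * φ i j₀ :=
    by nlinarith [mul_nonneg (neg_nonneg.mpr hF) (neg_nonneg.mpr hB)]
  have h3 : -(1/σ^2) * f ((j₀:ℝ)/(J:ℝ)) (φ i j₀ * ψ i j₀) * φ i j₀ ≤ 0 := by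
    nlinarith [mul_nonneg hs.le hFB]
  linarith

private lemma comp_step (T σ : ℝ) (hT : 0 < T) (hσ : 0 < σ)
    (I J : ℕ) (hI : 1 ≤ I) (hJ : 1 ≤ J)
    (f : ℝ → ℝ → ℝ)
    (hfneg : ∀ x ∈ Set.Icc (0:ℝ) 1, ∀ ξ : ℝ, f x ξ ≤ 0)
    (hfmono : ∀ x ∈ Set.Icc (0:ℝ) 1, Antitone (f x))
    (ψ₁ ψ₂ φ₁ φ₂ : ℕ → ℕ → ℝ) (i : ℕ)
    (hψ₁ : ∀ j ≤ J, 0 ≤ ψ₁ i j) (hψle : ∀ j ≤ J, ψ₁ i j ≤ ψ₂ i j)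
    (heq₁ : ∀ j ≤ J,
      (φ₁ (i+1) j - φ₁ i j) / (T / (I:ℝ))
        + σ^2 / 2 * ((φ₁ i (min (j+1) J) - 2 * φ₁ i j + φ₁ i (j-1)) / (1/(J:ℝ))^2)
      = -(1/σ^2) * f ((j:ℝ)/(J:ℝ)) (φ₁ i j * ψ₁ i j) * φ₁ i j)
    (heq₂ : ∀ j ≤ J,
      (φ₂ (i+1) j - φ₂ i j) / (T / (I:ℝ))
        + σ^2 / 2 * ((φ₂ i (min (j+1) J) - 2 * φ₂ i j + φ₂ i (j-1)) / (1/(J:ℝ))^2)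
      = -(1/σ^2) * f ((j:ℝ)/(J:ℝ)) (φ₂ i j * ψ₂ i j) * φ₂ i j)
    (hpos₁ : ∀ j ≤ J, 0 < φ₁ i j)
    (hnext : ∀ j ≤ J, φ₂ (i+1) j ≤ φ₁ (i+1) j) :
    ∀ j ≤ J, φ₂ i j ≤ φ₁ i j := by
  obtain ⟨j₀, hj₀mem, hmax⟩ := Finset.exists_max_image (Finset.range (J+1))
    (fun j => φ₂ i j - φ₁ i j) ⟨0, Finset.mem_range.mpr (Nat.succ_pos J)⟩
  have hj₀ : j₀ ≤ J := Nat.lt_succ_iff.mp (Finset.mem_range.mp hj₀mem)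
  suffices h : φ₂ i j₀ - φ₁ i j₀ ≤ 0 by
    intro j hj
    have := hmax j (Finset.mem_range.mpr (Nat.lt_succ_of_le hj))
    linarith
  by_contra hW
  push_neg at hW
  have hJ0 : (0:ℝ) < (J:ℝ) := by exact_mod_cast hJ
  have hI0 : (0:ℝ) < (I:ℝ) := by exact_mod_cast hI
  have hdt : 0 < T / (I:ℝ) := div_pos hT hI0
  have hdx2 : 0 < (1/(J:ℝ))^2 := by positivity
  have E₁ := heq₁ j₀ hj₀
  have E₂ := heq₂ j₀ hj₀
  have hxm := xj_mem J hJ hj₀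
  set x := (j₀:ℝ)/(J:ℝ)
  set B₁ := φ₁ i j₀
  set B₂ := φ₂ i j₀
  have hB₁ : 0 < B₁ := hpos₁ j₀ hj₀
  have hB₂ : B₁ < B₂ := by simpa using hW
  -- the difference of the reaction terms has a sign
  have hargs : B₁ * ψ₁ i j₀ ≤ B₂ * ψ₂ i j₀ := by
    have h1 : B₁ * ψ₁ i j₀ ≤ B₂ * ψ₁ i j₀ :=
      mul_le_mul_of_nonneg_right hB₂.le (hψ₁ j₀ hj₀)
    have h2 : B₂ * ψ₁ i j₀ ≤ B₂ * ψ₂ i j₀ :=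
      mul_le_mul_of_nonneg_left (hψle j₀ hj₀) (by linarith)
    linarith
  have hF2le : f x (B₂ * ψ₂ i j₀) ≤ f x (B₁ * ψ₁ i j₀) := hfmono x hxm hargs
  have hF2neg : f x (B₂ * ψ₂ i j₀) ≤ 0 := hfneg x hxm _
  have hFB : f x (B₂ * ψ₂ i j₀) * B₂ ≤ f x (B₁ * ψ₁ i j₀) * B₁ := by
    have h1 : f x (B₂ * ψ₂ i j₀) * B₂ ≤ f x (B₂ * ψ₂ i j₀) * B₁ := by
      nlinarith
    have h2 : f x (B₂ * ψ₂ i j₀) * B₁ ≤ f x (B₁ * ψ₁ i j₀) * B₁ :=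
      mul_le_mul_of_nonneg_right hF2le hB₁.le
    linarith
  have hs : 0 < 1/σ^2 := by positivity
  have hR : 0 ≤ (-(1/σ^2) * f x (B₂ * ψ₂ i j₀) * B₂) - (-(1/σ^2) * f x (B₁ * ψ₁ i j₀) * B₁) := by
    nlinarith [mul_nonneg hs.le (sub_nonneg.mpr hFB)]
  -- neighbor bounds for the difference
  have hnb1 : φ₂ i (min (j₀+1) J) - φ₁ i (min (j₀+1) J) ≤ B₂ - B₁ :=
    hmax _ (Finset.mem_range.mpr (Nat.lt_succ_of_le (min_le_right _ _)))
  have hnb2 : φ₂ i (j₀-1) - φ₁ i (j₀-1) ≤ B₂ - B₁ :=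
    hmax _ (Finset.mem_range.mpr (Nat.lt_succ_of_le (le_trans (Nat.sub_le _ _) hj₀)))
  have hA : φ₂ (i+1) j₀ - φ₁ (i+1) j₀ ≤ 0 := sub_nonpos.mpr (hnext j₀ hj₀)
  have hLHS1 : ((φ₂ (i+1) j₀ - B₂) - (φ₁ (i+1) j₀ - B₁)) / (T / (I:ℝ)) < 0 :=
    div_neg_of_neg_of_pos (by linarith) hdt
  have hLHS2 : σ^2 / 2 * (((φ₂ i (min (j₀+1) J) - 2 * B₂ + φ₂ i (j₀-1))
      - (φ₁ i (min (j₀+1) J) - 2 * B₁ + φ₁ i (j₀-1))) / (1/(J:ℝ))^2) ≤ 0 :=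
    mul_nonpos_of_nonneg_of_nonpos (by positivity)
      (div_nonpos_of_nonpos_of_nonneg (by linarith) hdx2.le)
  have hsplit : ((φ₂ (i+1) j₀ - B₂) - (φ₁ (i+1) j₀ - B₁)) / (T / (I:ℝ))
      + σ^2 / 2 * (((φ₂ i (min (j₀+1) J) - 2 * B₂ + φ₂ i (j₀-1))
      - (φ₁ i (min (j₀+1) J) - 2 * B₁ + φ₁ i (j₀-1))) / (1/(J:ℝ))^2)
      = ((φ₂ (i+1) j₀ - B₂) / (T / (I:ℝ))
        + σ^2 / 2 * ((φ₂ i (min (j₀+1) J) - 2 * B₂ + φ₂ i (j₀-1)) / (1/(J:ℝ))^2))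
      - ((φ₁ (i+1) j₀ - B₁) / (T / (I:ℝ))
        + σ^2 / 2 * ((φ₁ i (min (j₀+1) J) - 2 * B₁ + φ₁ i (j₀-1)) / (1/(J:ℝ))^2)) := by
    ring
  rw [E₁, E₂] at hsplit
  linarith

theorem stmt_4 (T σ : ℝ) (hT : 0 < T) (hσ : 0 < σ)
    (I J : ℕ) (hI : 1 ≤ I) (hJ : 1 ≤ J)
    (f : ℝ → ℝ → ℝ) (uT : ℝ → ℝ)
    (hfc : ∀ x ∈ Set.Icc (0:ℝ) 1, Continuous (f x))
    (hfb : ∃ B : ℝ, ∀ x ∈ Set.Icc (0:ℝ) 1, ∀ ξ : ℝ, |f x ξ| ≤ B)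
    (hfneg : ∀ x ∈ Set.Icc (0:ℝ) 1, ∀ ξ : ℝ, f x ξ ≤ 0)
    (hfmono : ∀ x ∈ Set.Icc (0:ℝ) 1, Antitone (f x))
    (huTb : ∃ B : ℝ, ∀ x ∈ Set.Icc (0:ℝ) 1, |uT x| ≤ B)
    (ψ₁ ψ₂ : ℕ → ℕ → ℝ) (hψ₁ : MemM I J 0 ψ₁) (hψ₂ : MemM I J 0 ψ₂)
    (hle : ∀ i ≤ I, ∀ j ≤ J, ψ₁ i j ≤ ψ₂ i j)
    (φ₁ φ₂ : ℕ → ℕ → ℝ)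
    (hφ₁ : BScheme T σ I J f uT ψ₁ φ₁) (hφ₂ : BScheme T σ I J f uT ψ₂ φ₂) :
    ∀ i ≤ I, ∀ j ≤ J, φ₂ i j ≤ φ₁ i j := by
  have key : ∀ k : ℕ, ∀ j ≤ J,
      0 < φ₁ (I-k) j ∧ 0 < φ₂ (I-k) j ∧ φ₂ (I-k) j ≤ φ₁ (I-k) j := by
    intro k
    induction k with
    | zero =>
      intro j hj
      simp only [Nat.sub_zero]
      rw [hφ₁.2 j hj, hφ₂.2 j hj]
      exact ⟨Real.exp_pos _, Real.exp_pos _, le_refl _⟩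
    | succ k ih =>
      by_cases hk : I ≤ k
      · have e1 : I - (k+1) = I - k := by omega
        rw [e1]; exact ih
      · push_neg at hk
        set i := I - (k+1) with hi
        have hiI : i < I := by omega
        have hsucc : i + 1 = I - k := by omega
        have ihp : ∀ j ≤ J, 0 < φ₁ (i+1) j ∧ 0 < φ₂ (i+1) j ∧ φ₂ (i+1) j ≤ φ₁ (i+1) j := by
          rw [hsucc]; exact ih
        have hiI' : i ≤ I := hiI.le
        have heq₁ := fun j hj => hφ₁.1 i hiI j hj
        have heq₂ := fun j hj => hφ₂.1 i hiI j hj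
        have hpos₁ : ∀ j ≤ J, 0 < φ₁ i j :=
          pos_step T σ hT hσ I J hI hJ f hfneg ψ₁ φ₁ i heq₁ (fun j hj => (ihp j hj).1)
        have hpos₂ : ∀ j ≤ J, 0 < φ₂ i j :=
          pos_step T σ hT hσ I J hI hJ f hfneg ψ₂ φ₂ i heq₂ (fun j hj => (ihp j hj).2.1)
        have hcomp : ∀ j ≤ J, φ₂ i j ≤ φ₁ i j :=
          comp_step T σ hT hσ I J hI hJ f hfneg hfmono ψ₁ ψ₂ φ₁ φ₂ i
            (fun j hj => hψ₁ i hiI' j hj) (fun j hj => hle i hiI' j hj)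
            heq₁ heq₂ hpos₁ (fun j hj => (ihp j hj).2.2)
        exact fun j hj => ⟨hpos₁ j hj, hpos₂ j hj, hcomp j hj⟩
  intro i hi j hj
  have := (key (I - i) j hj).2.2
  rwa [Nat.sub_sub_self hi] at this
end
end

section
/- Let ε > 0. For every φ̂ ∈ M_ε there exists a unique ψ̂ ∈ M satisfying the discrete forward scheme (Ê_ψ) with data φ̂ (equations for 0 ≤ i ≤ I−1, 0 ≤ j ≤ J, with initial condition ψ̂_{0,j} = m_0(x_j)/φ̂_{0,j}). Hence the map Ψ̂ : M_ε → M sending φ̂ to this solution is well defined; moreover ψ̂ = Ψ̂(φ̂) has all entries nonnegative, i.e. Ψ̂(φ̂) ∈ M_0. -/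
noncomputable section

open Real Filter

lemma gm_anti (k : ℝ → ℝ) (hk : ∀ u, k u ≤ 0) (hmono : Antitone k)
    {s t : ℝ} (hst : s ≤ t) : k (max t 0) * t ≤ k (max s 0) * s := by
  rcases le_or_gt 0 s with hs | hs
  · rw [max_eq_left (hs.trans hst), max_eq_left hs]
    have h1 : k t ≤ k s := hmono hst
    nlinarith [hk t, hk s, mul_nonneg (sub_nonneg.2 h1) hs,
      mul_nonneg (neg_nonneg.2 (hk t)) (sub_nonneg.2 hst)]
  · rw [max_eq_right hs.le]
    rcases le_or_gt t 0 with ht | ht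
    · rw [max_eq_right ht]
      nlinarith [hk 0]
    · rw [max_eq_left ht.le]
      nlinarith [hk t, hk 0]

lemma scalar_exists (α : ℝ) (hα : 0 < α) (k : ℝ → ℝ) (hk : ∀ u, k u ≤ 0)
    (hkc : Continuous k) (r : ℝ) :
    ∃ s : ℝ, α * s - k (max s 0) * s = r := by
  set h : ℝ → ℝ := fun s => α * s - k (max s 0) * s with hh
  have hc : Continuous h := by
    apply (continuous_const.mul continuous_id).sub
    exact (hkc.comp (continuous_id.max continuous_const)).mul continuous_id
  set s1 : ℝ := max (r/α) 0 with hs1def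
  have hs1 : r ≤ h s1 := by
    have h10 : (0:ℝ) ≤ s1 := le_max_right _ _
    have hm : max s1 0 = s1 := max_eq_left h10
    have hk1 : k (max s1 0) * s1 ≤ 0 := by
      rw [hm]; nlinarith [hk s1]
    have h2 : r ≤ α * s1 := by
      calc r = α * (r/α) := by field_simp
      _ ≤ α * s1 := mul_le_mul_of_nonneg_left (le_max_left _ _) hα.le
    simp only [hh]; linarith
  have hd : 0 < α - k 0 := by linarith [hk 0]
  set s0 : ℝ := min (r/(α - k 0)) 0 with hs0def
  have hs00 : s0 ≤ 0 := min_le_right _ _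
  have hmax0 : max s0 0 = 0 := max_eq_right hs00
  have hs0 : h s0 ≤ r := by
    have he : h s0 = (α - k 0) * s0 := by
      simp only [hh, hmax0]; ring
    rw [he]
    calc (α - k 0) * s0 ≤ (α - k 0) * (r/(α - k 0)) :=
          mul_le_mul_of_nonneg_left (min_le_left _ _) hd.le
    _ = r := by field_simp
  have hs01 : s0 ≤ s1 := le_trans hs00 (le_max_right _ _)
  obtain ⟨s, _, hs⟩ := intermediate_value_Icc hs01 hc.continuousOn ⟨hs0, hs1⟩
  exact ⟨s, hs⟩

lemma banach_step (n : ℕ) (a β : ℝ) (ha : 0 < a) (hβ : 0 < β)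
    (g : Fin (n+1) → ℝ → ℝ)
    (hmono : ∀ j, ∀ s t : ℝ, s ≤ t → g j t ≤ g j s)
    (hsolv : ∀ j (r : ℝ), ∃ s, (a + 2*β) * s - g j s = r)
    (p : Fin (n+1) → ℝ) (jp jm : Fin (n+1) → Fin (n+1)) :
    ∃ v : Fin (n+1) → ℝ,
      (∀ j, (a + 2*β) * v j - g j (v j) = a * p j + β * (v (jp j) + v (jm j))) ∧
      ∀ w : Fin (n+1) → ℝ,
        (∀ j, (a + 2*β) * w j - g j (w j) = a * p j + β * (w (jp j) + w (jm j))) → w = v := by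
  have hα : 0 < a + 2*β := by linarith
  choose H hH using hsolv
  have key : ∀ j (s t : ℝ), s ≤ t →
      (a+2*β)*(t - s) ≤ ((a+2*β)*t - g j t) - ((a+2*β)*s - g j s) := by
    intro j s t h
    nlinarith [hmono j s t h]
  have hinj : ∀ j (s t : ℝ),
      (a+2*β)*s - g j s = (a+2*β)*t - g j t → s = t := by
    intro j s t he
    rcases le_total s t with h | h
    · have := key j s t h; nlinarith
    · have := key j t s h; nlinarith
  set q : ℝ := 2*β/(a+2*β) with hq
  have hq0 : 0 ≤ q := by positivity
  have hq1 : q < 1 := by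
    rw [hq, div_lt_one hα]; linarith
  set Tm : (Fin (n+1) → ℝ) → (Fin (n+1) → ℝ) :=
    fun v j => H j (a * p j + β * (v (jp j) + v (jm j))) with hTm
  have hlip : ∀ v w, dist (Tm v) (Tm w) ≤ q * dist v w := by
    intro v w
    rw [dist_pi_le_iff (by positivity)]
    intro j
    set s := Tm v j with hs'
    set t := Tm w j with ht'
    have hsv : (a+2*β)*s - g j s = a * p j + β * (v (jp j) + v (jm j)) := hH j _
    have htw : (a+2*β)*t - g j t = a * p j + β * (w (jp j) + w (jm j)) := hH j _
    have h1 : (a+2*β) * |s - t| ≤ β * |v (jp j) - w (jp j)| + β * |v (jm j) - w (jm j)| := by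
      rcases le_total s t with h | h
      · have hk2 := key j s t h
        rw [abs_of_nonpos (by linarith), neg_sub]
        have he : ((a+2*β)*t - g j t) - ((a+2*β)*s - g j s)
            = β * ((w (jp j) - v (jp j)) + (w (jm j) - v (jm j))) := by
          rw [hsv, htw]; ring
        have e1 : w (jp j) - v (jp j) ≤ |v (jp j) - w (jp j)| := by
          rw [abs_sub_comm]; exact le_abs_self _
        have e2 : w (jm j) - v (jm j) ≤ |v (jm j) - w (jm j)| := by
          rw [abs_sub_comm]; exact le_abs_self _
        nlinarith [hk2, he]
      · have hk2 := key j t s h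
        rw [abs_of_nonneg (by linarith)]
        have he : ((a+2*β)*s - g j s) - ((a+2*β)*t - g j t)
            = β * ((v (jp j) - w (jp j)) + (v (jm j) - w (jm j))) := by
          rw [hsv, htw]; ring
        nlinarith [hk2, he, le_abs_self (v (jp j) - w (jp j)), le_abs_self (v (jm j) - w (jm j))]
    have h2 : |v (jp j) - w (jp j)| ≤ dist v w := by
      rw [← Real.dist_eq]; exact dist_le_pi_dist v w (jp j)
    have h3 : |v (jm j) - w (jm j)| ≤ dist v w := by
      rw [← Real.dist_eq]; exact dist_le_pi_dist v w (jm j)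
    rw [Real.dist_eq, hq, div_mul_eq_mul_div, le_div_iff₀ hα]
    nlinarith
  have hC : ContractingWith (Real.toNNReal q) Tm := by
    constructor
    · exact Real.toNNReal_lt_one.2 hq1
    · apply LipschitzWith.of_dist_le_mul
      intro x y
      rw [Real.coe_toNNReal q hq0]
      exact hlip x y
  refine ⟨ContractingWith.fixedPoint Tm hC, ?_, ?_⟩
  · intro j
    have hfix : Tm (ContractingWith.fixedPoint Tm hC) = ContractingWith.fixedPoint Tm hC :=
      hC.fixedPoint_isFixedPt
    have hv : ContractingWith.fixedPoint Tm hC j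
        = H j (a * p j + β * (ContractingWith.fixedPoint Tm hC (jp j)
            + ContractingWith.fixedPoint Tm hC (jm j))) := (congrFun hfix j).symm
    rw [hv]
    exact hH j _
  · intro w hw
    have hTw : Function.IsFixedPt Tm w := by
      funext j
      exact hinj j _ _ ((hH j _).trans (hw j).symm)
    exact hC.fixedPoint_unique hTw

lemma scheme_iff (T σ Ir Jr a β : ℝ) (hT : 0 < T) (hIr : 0 < Ir) (hJr : 0 < Jr)
    (haa : a = Ir/T) (hbb : β = σ^2*Jr^2/2) {s p n1 n2 R : ℝ} :
    ((s - p)/(T/Ir) - σ^2/2 * ((n1 - 2*s + n2)/(1/Jr)^2) = R) ↔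
    ((a + 2*β)*s - R = a*p + β*(n1 + n2)) := by
  subst haa hbb
  have e : (s - p)/(T/Ir) - σ^2/2 * ((n1 - 2*s + n2)/(1/Jr)^2)
      = (Ir/T)*s + σ^2*Jr^2*s - (Ir/T)*p - (σ^2*Jr^2/2)*(n1+n2) := by
    field_simp
    ring
  rw [e]
  constructor <;> intro h <;> linarith

theorem stmt_5 (T σ : ℝ) (hT : 0 < T) (hσ : 0 < σ)
    (I J : ℕ) (hI : 1 ≤ I) (hJ : 1 ≤ J)
    (f : ℝ → ℝ → ℝ) (m0 : ℝ → ℝ)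
    (hfc : ∀ x ∈ Set.Icc (0:ℝ) 1, Continuous (f x))
    (hfb : ∃ B : ℝ, ∀ x ∈ Set.Icc (0:ℝ) 1, ∀ ξ : ℝ, |f x ξ| ≤ B)
    (hfneg : ∀ x ∈ Set.Icc (0:ℝ) 1, ∀ ξ : ℝ, f x ξ ≤ 0)
    (hfmono : ∀ x ∈ Set.Icc (0:ℝ) 1, Antitone (f x))
    (hm0b : ∃ B : ℝ, ∀ x ∈ Set.Icc (0:ℝ) 1, |m0 x| ≤ B)
    (hm0 : ∀ x ∈ Set.Icc (0:ℝ) 1, 0 ≤ m0 x)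
    (ε : ℝ) (hε : 0 < ε)
    (φ : ℕ → ℕ → ℝ) (hφ : MemM I J ε φ) :
    ∃ ψ : ℕ → ℕ → ℝ, FScheme T σ I J f m0 φ ψ ∧
      (∀ ψ' : ℕ → ℕ → ℝ, FScheme T σ I J f m0 φ ψ' →
        ∀ i ≤ I, ∀ j ≤ J, ψ' i j = ψ i j) ∧
      MemM I J 0 ψ := by
  classical
  have hI0 : (0:ℝ) < I := by exact_mod_cast Nat.pos_of_ne_zero (by omega)
  have hJ0 : (0:ℝ) < J := by exact_mod_cast Nat.pos_of_ne_zero (by omega)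
  set a : ℝ := (I:ℝ)/T with ha_def
  set β : ℝ := σ^2*(J:ℝ)^2/2 with hβ_def
  have ha : 0 < a := by rw [ha_def]; positivity
  have hβ : 0 < β := by rw [hβ_def]; positivity
  have hxmem : ∀ j : ℕ, j ≤ J → ((j:ℝ)/(J:ℝ)) ∈ Set.Icc (0:ℝ) 1 := by
    intro j hj
    constructor
    · positivity
    · rw [div_le_one hJ0]; exact_mod_cast hj
  have hstep : ∀ i : ℕ, i < I → ∀ p : Fin (J+1) → ℝ,
      ∃ v : Fin (J+1) → ℝ,
        (∀ j : Fin (J+1), (a + 2*β) * v j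
            - 1/σ^2 * f (((j:ℕ):ℝ)/(J:ℝ)) (φ (i+1) (j:ℕ) * max (v j) 0) * v j
          = a * p j + β * (v ⟨min ((j:ℕ)+1) J, by omega⟩
              + v ⟨(j:ℕ)-1, by have := j.isLt; omega⟩)) ∧
        ∀ w : Fin (J+1) → ℝ,
          (∀ j : Fin (J+1), (a + 2*β) * w j
              - 1/σ^2 * f (((j:ℕ):ℝ)/(J:ℝ)) (φ (i+1) (j:ℕ) * max (w j) 0) * w j
            = a * p j + β * (w ⟨min ((j:ℕ)+1) J, by omega⟩
                + w ⟨(j:ℕ)-1, by have := j.isLt; omega⟩)) → w = v := by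
    intro i hi p
    have hxm : ∀ j : Fin (J+1), (((j:ℕ):ℝ)/(J:ℝ)) ∈ Set.Icc (0:ℝ) 1 :=
      fun j => hxmem j (Fin.is_le j)
    have hc : ∀ j : Fin (J+1), (0:ℝ) ≤ φ (i+1) (j:ℕ) :=
      fun j => le_trans hε.le (hφ (i+1) hi (j:ℕ) (Fin.is_le j))
    have hσ2 : (0:ℝ) < 1/σ^2 := by positivity
    exact banach_step J a β ha hβ
      (fun j s => 1/σ^2 * f (((j:ℕ):ℝ)/(J:ℝ)) (φ (i+1) (j:ℕ) * max s 0) * s)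
      (fun j s t hst => gm_anti (fun u => 1/σ^2 * f (((j:ℕ):ℝ)/(J:ℝ)) (φ (i+1) (j:ℕ) * u))
        (fun u => by nlinarith [hfneg _ (hxm j) (φ (i+1) (j:ℕ) * u)])
        (fun u u' huu' => mul_le_mul_of_nonneg_left
          (hfmono _ (hxm j) (mul_le_mul_of_nonneg_left huu' (hc j))) hσ2.le)
        hst)
      (fun j r => scalar_exists (a+2*β) (by linarith)
        (fun u => 1/σ^2 * f (((j:ℕ):ℝ)/(J:ℝ)) (φ (i+1) (j:ℕ) * u))
        (fun u => by nlinarith [hfneg _ (hxm j) (φ (i+1) (j:ℕ) * u)])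
        (continuous_const.mul ((hfc _ (hxm j)).comp (continuous_const.mul continuous_id))) r)
      p (fun j => ⟨min ((j:ℕ)+1) J, by omega⟩) (fun j => ⟨(j:ℕ)-1, by have := j.isLt; omega⟩)
  choose! uS hS using hstep
  obtain ⟨u, hu0, huS⟩ : ∃ u : ℕ → Fin (J+1) → ℝ,
      (u 0 = fun j : Fin (J+1) => m0 (((j:ℕ):ℝ)/(J:ℝ)) / φ 0 (j:ℕ))
        ∧ ∀ i, u (i+1) = uS i (u i) :=
    ⟨fun i => Nat.rec (motive := fun _ => Fin (J+1) → ℝ)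
      (fun j : Fin (J+1) => m0 (((j:ℕ):ℝ)/(J:ℝ)) / φ 0 (j:ℕ)) (fun n un => uS n un) i,
      rfl, fun i => rfl⟩
  have hunn : ∀ i, i ≤ I → ∀ j : Fin (J+1), 0 ≤ u i j := by
    intro i
    induction i with
    | zero =>
      intro _ j
      rw [hu0]
      exact div_nonneg (hm0 _ (hxmem _ (Fin.is_le j)))
        (le_trans hε.le (hφ 0 (Nat.zero_le I) _ (Fin.is_le j)))
    | succ i ih =>
      intro hsi
      have hiI : i < I := hsi
      have hp := ih (le_of_lt hiI)
      have heq := (hS i hiI (u i)).1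
      rw [← huS i] at heq
      obtain ⟨j0, -, hmin⟩ := Finset.exists_min_image Finset.univ (u (i+1)) Finset.univ_nonempty
      intro j
      refine le_trans ?_ (hmin j (Finset.mem_univ j))
      by_contra h0
      push_neg at h0
      have he := heq j0
      rw [max_eq_right h0.le, mul_zero] at he
      have hgpos : 0 ≤ 1/σ^2 * f (((j0:ℕ):ℝ)/(J:ℝ)) 0 * u (i+1) j0 := by
        have h1 : (0:ℝ) < 1/σ^2 := by positivity
        have h2 := hfneg _ (hxmem _ (Fin.is_le j0)) 0
        nlinarith [mul_nonneg (mul_nonneg h1.le (neg_nonneg.mpr h2)) (neg_nonneg.mpr h0.le)]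
      have h3 : 0 ≤ a * u i j0 := mul_nonneg ha.le (hp j0)
      have h4 : β * u (i+1) j0 ≤ β * u (i+1) ⟨min ((j0:ℕ)+1) J, by omega⟩ :=
        mul_le_mul_of_nonneg_left (hmin _ (Finset.mem_univ _)) hβ.le
      have h5 : β * u (i+1) j0 ≤ β * u (i+1) ⟨(j0:ℕ)-1, by have := j0.isLt; omega⟩ :=
        mul_le_mul_of_nonneg_left (hmin _ (Finset.mem_univ _)) hβ.le
      have h6 : a * u (i+1) j0 < 0 := mul_neg_of_pos_of_neg ha h0
      linarith [he]
  obtain ⟨ψ, hψdef⟩ : ∃ ψ : ℕ → ℕ → ℝ,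
      ∀ i j, ψ i j = if h : j < J+1 then u i ⟨j, h⟩ else 0 :=
    ⟨fun i j => if h : j < J+1 then u i ⟨j, h⟩ else 0, fun i j => rfl⟩
  have hψval : ∀ (i j : ℕ) (h : j < J+1), ψ i j = u i ⟨j, h⟩ := by
    intro i j h
    rw [hψdef i j, dif_pos h]
  refine ⟨ψ, ⟨?_, ?_⟩, ?_, ?_⟩
  · -- the forward equations
    intro i hi j hj
    have hjlt : j < J + 1 := by omega
    have hjp : min (j+1) J < J + 1 := by omega
    have hjm : j - 1 < J + 1 := by omega
    rw [scheme_iff T σ (I:ℝ) (J:ℝ) a β hT hI0 hJ0 ha_def hβ_def]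
    rw [hψval (i+1) j hjlt, hψval i j hjlt, hψval (i+1) _ hjp, hψval (i+1) _ hjm]
    have heq := (hS i hi (u i)).1 ⟨j, hjlt⟩
    rw [← huS i] at heq
    rw [max_eq_left (hunn (i+1) hi ⟨j, hjlt⟩)] at heq
    exact heq
  · -- initial condition
    intro j hj
    rw [hψval 0 j (by omega), hu0]
  · -- uniqueness
    intro ψ' hψ'
    have keyu : ∀ i, i ≤ I → ∀ j : Fin (J+1), ψ' i (j:ℕ) = u i j := by
      intro i
      induction i with
      | zero =>
        intro _ j
        rw [hψ'.2 (j:ℕ) (Fin.is_le j), hu0]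
      | succ i ih =>
        intro hsi
        have hiI : i < I := hsi
        have ihi := ih (le_of_lt hiI)
        have heqw : ∀ j : Fin (J+1), (a + 2*β) * ψ' (i+1) (j:ℕ)
            - 1/σ^2 * f (((j:ℕ):ℝ)/(J:ℝ)) (φ (i+1) (j:ℕ) * ψ' (i+1) (j:ℕ)) * ψ' (i+1) (j:ℕ)
            = a * u i j + β * (ψ' (i+1) (min ((j:ℕ)+1) J) + ψ' (i+1) ((j:ℕ)-1)) := by
          intro j
          have h0 := hψ'.1 i hiI (j:ℕ) (Fin.is_le j)
          rw [scheme_iff T σ (I:ℝ) (J:ℝ) a β hT hI0 hJ0 ha_def hβ_def] at h0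
          rw [ihi j] at h0
          exact h0
        have hwnn : ∀ j : Fin (J+1), 0 ≤ ψ' (i+1) (j:ℕ) := by
          obtain ⟨j0, -, hmin⟩ := Finset.exists_min_image Finset.univ
            (fun j : Fin (J+1) => ψ' (i+1) (j:ℕ)) Finset.univ_nonempty
          intro j
          refine le_trans ?_ (hmin j (Finset.mem_univ j))
          by_contra h0
          push_neg at h0
          have he := heqw j0
          have hgpos : 0 ≤ 1/σ^2 * f (((j0:ℕ):ℝ)/(J:ℝ))
              (φ (i+1) (j0:ℕ) * ψ' (i+1) (j0:ℕ)) * ψ' (i+1) (j0:ℕ) := by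
            have h1 : (0:ℝ) < 1/σ^2 := by positivity
            have h2 := hfneg _ (hxmem _ (Fin.is_le j0)) (φ (i+1) (j0:ℕ) * ψ' (i+1) (j0:ℕ))
            nlinarith [mul_nonneg (mul_nonneg h1.le (neg_nonneg.mpr h2)) (neg_nonneg.mpr h0.le)]
          have h3 : 0 ≤ a * u i j0 := mul_nonneg ha.le (hunn i (le_of_lt hiI) j0)
          have h4 : β * ψ' (i+1) (j0:ℕ) ≤ β * ψ' (i+1) (min ((j0:ℕ)+1) J) :=
            mul_le_mul_of_nonneg_left
              (hmin ⟨min ((j0:ℕ)+1) J, by omega⟩ (Finset.mem_univ _)) hβ.le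
          have h5 : β * ψ' (i+1) (j0:ℕ) ≤ β * ψ' (i+1) ((j0:ℕ)-1) :=
            mul_le_mul_of_nonneg_left
              (hmin ⟨(j0:ℕ)-1, by have := j0.isLt; omega⟩ (Finset.mem_univ _)) hβ.le
          have h6 : a * ψ' (i+1) (j0:ℕ) < 0 := mul_neg_of_pos_of_neg ha h0
          linarith [he]
        have heqw' : ∀ j : Fin (J+1), (a + 2*β) * ψ' (i+1) (j:ℕ)
            - 1/σ^2 * f (((j:ℕ):ℝ)/(J:ℝ))
                (φ (i+1) (j:ℕ) * max (ψ' (i+1) (j:ℕ)) 0) * ψ' (i+1) (j:ℕ)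
            = a * u i j + β * (ψ' (i+1) (min ((j:ℕ)+1) J) + ψ' (i+1) ((j:ℕ)-1)) := by
          intro j
          rw [max_eq_left (hwnn j)]
          exact heqw j
        have huniq := (hS i hiI (u i)).2 (fun j : Fin (J+1) => ψ' (i+1) (j:ℕ))
          (fun j => heqw' j)
        rw [← huS i] at huniq
        intro j
        exact congrFun huniq j
    intro i hi j hj
    rw [hψval i j (by omega)]
    exact keyu i hi ⟨j, by omega⟩
  · -- nonnegativity
    intro i hi j hj
    rw [hψval i j (by omega)]
    exact hunn i hi _
end
end

section
/- Monotonicity of the discrete forward map: let ε > 0 and let φ̂₁, φ̂₂ ∈ M_ε satisfy φ̂₁_{i,j} ≤ φ̂₂_{i,j} for all i,j. Then Ψ̂(φ̂₁)_{i,j} ≥ Ψ̂(φ̂₂)_{i,j} for all i,j. -/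
noncomputable section

open Real Filter

lemma fs_nonneg (T σ : ℝ) (hT : 0 < T) (hσ : 0 < σ)
    (I J : ℕ) (hI : 1 ≤ I) (hJ : 1 ≤ J)
    (f : ℝ → ℝ → ℝ) (m0 : ℝ → ℝ)
    (hfneg : ∀ x ∈ Set.Icc (0:ℝ) 1, ∀ ξ : ℝ, f x ξ ≤ 0)
    (hm0 : ∀ x ∈ Set.Icc (0:ℝ) 1, 0 ≤ m0 x)
    (ε : ℝ) (hε : 0 < ε)
    (φ : ℕ → ℕ → ℝ) (hφ : MemM I J ε φ)
    (ψ : ℕ → ℕ → ℝ) (hψ : FScheme T σ I J f m0 φ ψ) :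
    ∀ i ≤ I, ∀ j ≤ J, 0 ≤ ψ i j := by
  have hdt : 0 < T / (I : ℝ) := div_pos hT (by exact_mod_cast Nat.lt_of_lt_of_le Nat.zero_lt_one hI)
  have hdx2 : (0:ℝ) < (1/(J:ℝ))^2 := by
    have : (0:ℝ) < (J:ℝ) := by exact_mod_cast Nat.lt_of_lt_of_le Nat.zero_lt_one hJ
    positivity
  have hx : ∀ j ≤ J, ((j:ℝ)/(J:ℝ)) ∈ Set.Icc (0:ℝ) 1 := by
    intro j hj
    have hJ0 : (0:ℝ) < (J:ℝ) := by exact_mod_cast Nat.lt_of_lt_of_le Nat.zero_lt_one hJ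
    constructor
    · positivity
    · rw [div_le_one hJ0]; exact_mod_cast hj
  intro i
  induction i with
  | zero =>
    intro _ j hj
    rw [hψ.2 j hj]
    have hφ0 : 0 < φ 0 j := lt_of_lt_of_le hε (hφ 0 (Nat.zero_le I) j hj)
    exact div_nonneg (hm0 _ (hx j hj)) hφ0.le
  | succ i ih =>
    intro hi j hj
    have hiI : i < I := Nat.lt_of_succ_le hi
    have ihi := ih (Nat.le_of_lt hiI)
    obtain ⟨js, hjsmem, hmin⟩ := Finset.exists_min_image (Finset.range (J+1))
      (fun j => ψ (i+1) j) ⟨0, by simp⟩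
    have hjsJ : js ≤ J := Nat.lt_succ_iff.mp (Finset.mem_range.mp hjsmem)
    have hminle : ψ (i+1) js ≤ ψ (i+1) j := hmin j (Finset.mem_range.mpr (Nat.lt_succ_of_le hj))
    suffices h : 0 ≤ ψ (i+1) js by linarith
    by_contra h
    push_neg at h
    have ha : ψ (i+1) js ≤ ψ (i+1) (min (js+1) J) :=
      hmin _ (Finset.mem_range.mpr (Nat.lt_succ_of_le (min_le_right _ _)))
    have hb : ψ (i+1) js ≤ ψ (i+1) (js-1) :=
      hmin _ (Finset.mem_range.mpr (Nat.lt_succ_of_le (le_trans (Nat.sub_le js 1) hjsJ)))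
    have heq := hψ.1 i hiI js hjsJ
    have hA : (ψ (i+1) js - ψ i js) / (T/(I:ℝ)) < 0 :=
      div_neg_of_neg_of_pos (by linarith [ihi js hjsJ]) hdt
    have hB : 0 ≤ σ^2/2 * ((ψ (i+1) (min (js+1) J) - 2 * ψ (i+1) js + ψ (i+1) (js-1)) / (1/(J:ℝ))^2) :=
      mul_nonneg (by positivity) (div_nonneg (by linarith) hdx2.le)
    have hf : f ((js:ℝ)/(J:ℝ)) (φ (i+1) js * ψ (i+1) js) ≤ 0 := hfneg _ (hx js hjsJ) _
    have hR : 0 ≤ (1/σ^2) * f ((js:ℝ)/(J:ℝ)) (φ (i+1) js * ψ (i+1) js) * ψ (i+1) js := by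
      have h1 : (1/σ^2) * f ((js:ℝ)/(J:ℝ)) (φ (i+1) js * ψ (i+1) js) ≤ 0 :=
        mul_nonpos_of_nonneg_of_nonpos (by positivity) hf
      nlinarith
    linarith

theorem stmt_6 (T σ : ℝ) (hT : 0 < T) (hσ : 0 < σ)
    (I J : ℕ) (hI : 1 ≤ I) (hJ : 1 ≤ J)
    (f : ℝ → ℝ → ℝ) (m0 : ℝ → ℝ)
    (hfc : ∀ x ∈ Set.Icc (0:ℝ) 1, Continuous (f x))
    (hfb : ∃ B : ℝ, ∀ x ∈ Set.Icc (0:ℝ) 1, ∀ ξ : ℝ, |f x ξ| ≤ B)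
    (hfneg : ∀ x ∈ Set.Icc (0:ℝ) 1, ∀ ξ : ℝ, f x ξ ≤ 0)
    (hfmono : ∀ x ∈ Set.Icc (0:ℝ) 1, Antitone (f x))
    (hm0b : ∃ B : ℝ, ∀ x ∈ Set.Icc (0:ℝ) 1, |m0 x| ≤ B)
    (hm0 : ∀ x ∈ Set.Icc (0:ℝ) 1, 0 ≤ m0 x)
    (ε : ℝ) (hε : 0 < ε)
    (φ₁ φ₂ : ℕ → ℕ → ℝ) (hφ₁ : MemM I J ε φ₁) (hφ₂ : MemM I J ε φ₂)
    (hle : ∀ i ≤ I, ∀ j ≤ J, φ₁ i j ≤ φ₂ i j)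
    (ψ₁ ψ₂ : ℕ → ℕ → ℝ)
    (hψ₁ : FScheme T σ I J f m0 φ₁ ψ₁) (hψ₂ : FScheme T σ I J f m0 φ₂ ψ₂) :
    ∀ i ≤ I, ∀ j ≤ J, ψ₂ i j ≤ ψ₁ i j := by
  have hn1 := fs_nonneg T σ hT hσ I J hI hJ f m0 hfneg hm0 ε hε φ₁ hφ₁ ψ₁ hψ₁
  have hn2 := fs_nonneg T σ hT hσ I J hI hJ f m0 hfneg hm0 ε hε φ₂ hφ₂ ψ₂ hψ₂
  have hdt : 0 < T / (I : ℝ) := div_pos hT (by exact_mod_cast Nat.lt_of_lt_of_le Nat.zero_lt_one hI)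
  have hdx2 : (0:ℝ) < (1/(J:ℝ))^2 := by
    have : (0:ℝ) < (J:ℝ) := by exact_mod_cast Nat.lt_of_lt_of_le Nat.zero_lt_one hJ
    positivity
  have hx : ∀ j ≤ J, ((j:ℝ)/(J:ℝ)) ∈ Set.Icc (0:ℝ) 1 := by
    intro j hj
    have hJ0 : (0:ℝ) < (J:ℝ) := by exact_mod_cast Nat.lt_of_lt_of_le Nat.zero_lt_one hJ
    constructor
    · positivity
    · rw [div_le_one hJ0]; exact_mod_cast hj
  intro i
  induction i with
  | zero =>
    intro _ j hj
    rw [hψ₁.2 j hj, hψ₂.2 j hj]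
    have hφ0 : 0 < φ₁ 0 j := lt_of_lt_of_le hε (hφ₁ 0 (Nat.zero_le I) j hj)
    exact div_le_div_of_nonneg_left (hm0 _ (hx j hj)) hφ0 (hle 0 (Nat.zero_le I) j hj)
  | succ i ih =>
    intro hi j hj
    have hiI : i < I := Nat.lt_of_succ_le hi
    have ihi := ih (Nat.le_of_lt hiI)
    obtain ⟨js, hjsmem, hmax⟩ := Finset.exists_max_image (Finset.range (J+1))
      (fun j => ψ₂ (i+1) j - ψ₁ (i+1) j) ⟨0, by simp⟩
    have hjsJ : js ≤ J := Nat.lt_succ_iff.mp (Finset.mem_range.mp hjsmem)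
    have hmaxle : ψ₂ (i+1) j - ψ₁ (i+1) j ≤ ψ₂ (i+1) js - ψ₁ (i+1) js :=
      hmax j (Finset.mem_range.mpr (Nat.lt_succ_of_le hj))
    suffices h : ψ₂ (i+1) js - ψ₁ (i+1) js ≤ 0 by linarith
    by_contra h
    push_neg at h
    -- neighbors
    have ha : ψ₂ (i+1) (min (js+1) J) - ψ₁ (i+1) (min (js+1) J) ≤ ψ₂ (i+1) js - ψ₁ (i+1) js :=
      hmax _ (Finset.mem_range.mpr (Nat.lt_succ_of_le (min_le_right _ _)))
    have hb : ψ₂ (i+1) (js-1) - ψ₁ (i+1) (js-1) ≤ ψ₂ (i+1) js - ψ₁ (i+1) js :=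
      hmax _ (Finset.mem_range.mpr (Nat.lt_succ_of_le (le_trans (Nat.sub_le js 1) hjsJ)))
    have heq1 := hψ₁.1 i hiI js hjsJ
    have heq2 := hψ₂.1 i hiI js hjsJ
    have hiI' : i + 1 ≤ I := hi
    have hψ1n : 0 ≤ ψ₁ (i+1) js := hn1 (i+1) hiI' js hjsJ
    have hψ2n : 0 ≤ ψ₂ (i+1) js := hn2 (i+1) hiI' js hjsJ
    have hφ1ε : ε ≤ φ₁ (i+1) js := hφ₁ (i+1) hiI' js hjsJ
    have hφle : φ₁ (i+1) js ≤ φ₂ (i+1) js := hle (i+1) hiI' js hjsJ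
    -- argument comparison
    have harg : φ₁ (i+1) js * ψ₁ (i+1) js ≤ φ₂ (i+1) js * ψ₂ (i+1) js :=
      mul_le_mul hφle (by linarith) hψ1n (by linarith)
    have hf2le : f ((js:ℝ)/(J:ℝ)) (φ₂ (i+1) js * ψ₂ (i+1) js)
        ≤ f ((js:ℝ)/(J:ℝ)) (φ₁ (i+1) js * ψ₁ (i+1) js) := hfmono _ (hx js hjsJ) harg
    have hf1 : f ((js:ℝ)/(J:ℝ)) (φ₁ (i+1) js * ψ₁ (i+1) js) ≤ 0 := hfneg _ (hx js hjsJ) _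
    -- RHS comparison
    have hRHS : (1/σ^2) * f ((js:ℝ)/(J:ℝ)) (φ₂ (i+1) js * ψ₂ (i+1) js) * ψ₂ (i+1) js
        ≤ (1/σ^2) * f ((js:ℝ)/(J:ℝ)) (φ₁ (i+1) js * ψ₁ (i+1) js) * ψ₁ (i+1) js := by
      rw [mul_assoc, mul_assoc]
      apply mul_le_mul_of_nonneg_left _ (by positivity)
      calc f ((js:ℝ)/(J:ℝ)) (φ₂ (i+1) js * ψ₂ (i+1) js) * ψ₂ (i+1) js
          ≤ f ((js:ℝ)/(J:ℝ)) (φ₁ (i+1) js * ψ₁ (i+1) js) * ψ₂ (i+1) js :=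
            mul_le_mul_of_nonneg_right hf2le hψ2n
        _ ≤ f ((js:ℝ)/(J:ℝ)) (φ₁ (i+1) js * ψ₁ (i+1) js) * ψ₁ (i+1) js :=
            mul_le_mul_of_nonpos_left (by linarith) hf1
    -- time-difference comparison
    have hAA : 0 < (ψ₂ (i+1) js - ψ₂ i js) / (T/(I:ℝ)) - (ψ₁ (i+1) js - ψ₁ i js) / (T/(I:ℝ)) := by
      rw [div_sub_div_same]
      exact div_pos (by linarith [ihi js hjsJ]) hdt
    -- space-difference comparison
    have hBB : σ^2/2 * ((ψ₂ (i+1) (min (js+1) J) - 2 * ψ₂ (i+1) js + ψ₂ (i+1) (js-1)) / (1/(J:ℝ))^2)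
        - σ^2/2 * ((ψ₁ (i+1) (min (js+1) J) - 2 * ψ₁ (i+1) js + ψ₁ (i+1) (js-1)) / (1/(J:ℝ))^2) ≤ 0 := by
      rw [← mul_sub, div_sub_div_same]
      exact mul_nonpos_of_nonneg_of_nonpos (by positivity) (div_nonpos_of_nonpos_of_nonneg (by linarith) hdx2.le)
    linarith
end
end

section
/- The iterates (φ̂^{n+1/2}, ψ̂ⁿ)_{n≥0} of the discrete scheme converge entrywise, as n → ∞, towards a pair (φ̂, ψ̂) ∈ M_ε × M_0 (with ε := exp(−(‖u_T‖_∞ + ‖f‖_∞ T)/σ²)) satisfying the coupled discrete system: for 0 ≤ i ≤ I−1, 0 ≤ j ≤ J, (φ̂_{i+1,j} − φ̂_{i,j})/Δt + (σ²/2)(φ̂_{i,j+1} − 2φ̂_{i,j} + φ̂_{i,j-1})/(Δx)² = −(1/σ²) f(x_j, φ̂_{i,j} ψ̂_{i,j}) φ̂_{i,j} with φ̂_{I,j} = exp(u_T(x_j)/σ²), and (ψ̂_{i+1,j} − ψ̂_{i,j})/Δt − (σ²/2)(ψ̂_{i+1,j+1} − 2ψ̂_{i+1,j} + ψ̂_{i+1,j-1})/(Δx)²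 = (1/σ²) f(x_j, φ̂_{i+1,j} ψ̂_{i+1,j}) ψ̂_{i+1,j} with ψ̂_{0,j} = m_0(x_j)/φ̂_{0,j}. -/
noncomputable section

open Real Filter

/-- clamped discrete Laplacian row operator -/
def Lap (J : ℕ) (v : ℕ → ℝ) (j : ℕ) : ℝ := v (min (j+1) J) - 2 * v j + v (j-1)

/-- implicit row operator -/
def Rop (J : ℕ) (r : ℝ) (d : ℕ → ℝ → ℝ) (v w : ℕ → ℝ) (j : ℕ) : ℝ :=
  v j + d j (v j * w j) * v j - r * Lap J v j

lemma comparison (J : ℕ) (r : ℝ) (hr : 0 ≤ r) (d : ℕ → ℝ → ℝ)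
    (hd0 : ∀ j ≤ J, ∀ ξ : ℝ, 0 ≤ d j ξ) (hdm : ∀ j ≤ J, Monotone (d j))
    (v v' w w' u u' : ℕ → ℝ)
    (heq : ∀ j ≤ J, u j = Rop J r d v w j) (heq' : ∀ j ≤ J, u' j = Rop J r d v' w' j)
    (hv' : ∀ j ≤ J, 0 ≤ v' j) (hw' : ∀ j ≤ J, 0 ≤ w' j)
    (hww : ∀ j ≤ J, w' j ≤ w j) (huu : ∀ j ≤ J, u j ≤ u' j) :
    ∀ j ≤ J, v j ≤ v' j := by
  by_contra hcon
  push_neg at hcon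
  obtain ⟨j0, hj0, hlt⟩ := hcon
  obtain ⟨js, hjs, hmax⟩ := (Finset.range (J+1)).exists_max_image (fun j => v j - v' j)
    ⟨j0, Finset.mem_range.mpr (Nat.lt_succ_of_le hj0)⟩
  have hjsJ : js ≤ J := Nat.lt_succ_iff.mp (Finset.mem_range.mp hjs)
  have hpos : 0 < v js - v' js := by
    have := hmax j0 (Finset.mem_range.mpr (Nat.lt_succ_of_le hj0))
    linarith
  have hmem : ∀ k ≤ J, v k - v' k ≤ v js - v' js := fun k hk =>
    hmax k (Finset.mem_range.mpr (Nat.lt_succ_of_le hk))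
  have h1 : v (min (js+1) J) - v' (min (js+1) J) ≤ v js - v' js :=
    hmem _ (min_le_right _ _)
  have h2 : v (js-1) - v' (js-1) ≤ v js - v' js :=
    hmem _ (le_trans (Nat.sub_le _ _) hjsJ)
  have hA' : 0 ≤ d js (v' js * w' js) := hd0 js hjsJ _
  have hAA : d js (v' js * w' js) ≤ d js (v js * w js) := by
    apply hdm js hjsJ
    have h3 : 0 ≤ v' js := hv' js hjsJ
    have h4 : 0 ≤ w' js := hw' js hjsJ
    nlinarith [hww js hjsJ]
  have hdv : d js (v' js * w' js) * v' js ≤ d js (v js * w js) * v js := by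
    have h3 : 0 ≤ v' js := hv' js hjsJ
    nlinarith
  have he1 := heq js hjsJ
  have he2 := heq' js hjsJ
  have := huu js hjsJ
  rw [he1, he2] at this
  unfold Rop Lap at this
  nlinarith [mul_le_mul_of_nonneg_left (by linarith : (v (min (js+1) J) - v' (min (js+1) J)) + (v (js-1) - v' (js-1)) - 2*(v js - v' js) ≤ 0) hr]

lemma row_lower (J : ℕ) (r : ℝ) (hr : 0 ≤ r) (d : ℕ → ℝ → ℝ)
    (hd0 : ∀ j ≤ J, ∀ ξ : ℝ, 0 ≤ d j ξ) (K' : ℝ) (hdK : ∀ j ≤ J, ∀ ξ : ℝ, d j ξ ≤ K')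
    (v w u : ℕ → ℝ) (heq : ∀ j ≤ J, u j = Rop J r d v w j)
    (a : ℝ) (ha : 0 < a) (hau : ∀ j ≤ J, a ≤ u j) :
    ∀ j ≤ J, a / (1 + K') ≤ v j := by
  have hK' : 0 ≤ K' := le_trans (hd0 0 (Nat.zero_le J) 0) (hdK 0 (Nat.zero_le J) 0)
  obtain ⟨js, hjs, hmin⟩ := (Finset.range (J+1)).exists_min_image v
    ⟨0, Finset.mem_range.mpr (Nat.succ_pos J)⟩
  have hjsJ : js ≤ J := Nat.lt_succ_iff.mp (Finset.mem_range.mp hjs)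
  have hmem : ∀ k ≤ J, v js ≤ v k := fun k hk =>
    hmin k (Finset.mem_range.mpr (Nat.lt_succ_of_le hk))
  have h1 : v js ≤ v (min (js+1) J) := hmem _ (min_le_right _ _)
  have h2 : v js ≤ v (js-1) := hmem _ (le_trans (Nat.sub_le _ _) hjsJ)
  have he := heq js hjsJ
  unfold Rop Lap at he
  have hd1 : 0 ≤ d js (v js * w js) := hd0 js hjsJ _
  have hd2 : d js (v js * w js) ≤ K' := hdK js hjsJ _
  have hu := hau js hjsJ
  have hvpos : 0 < v js := by
    by_contra h
    push_neg at h
    nlinarith [mul_le_mul_of_nonneg_left (by linarith : v (min (js+1) J) + v (js-1) - 2*(v js) ≥ 0) hr]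
  have hjj : a ≤ v js * (1 + K') := by
    nlinarith [mul_le_mul_of_nonneg_left (by linarith : v (min (js+1) J) + v (js-1) - 2*(v js) ≥ 0) hr]
  intro j hj
  calc a / (1+K') ≤ v js := by
        rw [div_le_iff₀ (by linarith)]; linarith
    _ ≤ v j := hmem j hj

lemma row_nonneg (J : ℕ) (r : ℝ) (hr : 0 ≤ r) (d : ℕ → ℝ → ℝ)
    (hd0 : ∀ j ≤ J, ∀ ξ : ℝ, 0 ≤ d j ξ)
    (v w u : ℕ → ℝ) (heq : ∀ j ≤ J, u j = Rop J r d v w j)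
    (hau : ∀ j ≤ J, 0 ≤ u j) :
    ∀ j ≤ J, 0 ≤ v j := by
  obtain ⟨js, hjs, hmin⟩ := (Finset.range (J+1)).exists_min_image v
    ⟨0, Finset.mem_range.mpr (Nat.succ_pos J)⟩
  have hjsJ : js ≤ J := Nat.lt_succ_iff.mp (Finset.mem_range.mp hjs)
  have hmem : ∀ k ≤ J, v js ≤ v k := fun k hk =>
    hmin k (Finset.mem_range.mpr (Nat.lt_succ_of_le hk))
  have h1 : v js ≤ v (min (js+1) J) := hmem _ (min_le_right _ _)
  have h2 : v js ≤ v (js-1) := hmem _ (le_trans (Nat.sub_le _ _) hjsJ)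
  have he := heq js hjsJ
  unfold Rop Lap at he
  have hd1 : 0 ≤ d js (v js * w js) := hd0 js hjsJ _
  have hu := hau js hjsJ
  have hvpos : 0 ≤ v js := by
    by_contra h
    push_neg at h
    nlinarith [mul_le_mul_of_nonneg_left (by linarith : v (min (js+1) J) + v (js-1) - 2*(v js) ≥ 0) hr]
  intro j hj; exact le_trans hvpos (hmem j hj)

lemma row_upper (J : ℕ) (r : ℝ) (hr : 0 ≤ r) (d : ℕ → ℝ → ℝ)
    (hd0 : ∀ j ≤ J, ∀ ξ : ℝ, 0 ≤ d j ξ)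
    (v w u : ℕ → ℝ) (heq : ∀ j ≤ J, u j = Rop J r d v w j)
    (hv : ∀ j ≤ J, 0 ≤ v j) (M : ℝ) (hau : ∀ j ≤ J, u j ≤ M) :
    ∀ j ≤ J, v j ≤ M := by
  obtain ⟨js, hjs, hmax⟩ := (Finset.range (J+1)).exists_max_image v
    ⟨0, Finset.mem_range.mpr (Nat.succ_pos J)⟩
  have hjsJ : js ≤ J := Nat.lt_succ_iff.mp (Finset.mem_range.mp hjs)
  have hmem : ∀ k ≤ J, v k ≤ v js := fun k hk =>
    hmax k (Finset.mem_range.mpr (Nat.lt_succ_of_le hk))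
  have h1 : v (min (js+1) J) ≤ v js := hmem _ (min_le_right _ _)
  have h2 : v (js-1) ≤ v js := hmem _ (le_trans (Nat.sub_le _ _) hjsJ)
  have he := heq js hjsJ
  unfold Rop Lap at he
  have hd1 : 0 ≤ d js (v js * w js) := hd0 js hjsJ _
  have hu := hau js hjsJ
  have hv0 : 0 ≤ v js := hv js hjsJ
  intro j hj
  have : v js ≤ M := by
    nlinarith [mul_le_mul_of_nonneg_left (by linarith : v (min (js+1) J) + v (js-1) - 2*(v js) ≤ 0) hr]
  exact le_trans (hmem j hj) this

lemma bscheme_rop (T σ : ℝ) (hT : 0 < T) (hσ : 0 < σ) (I J : ℕ) (hI : 1 ≤ I) (hJ : 1 ≤ J)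
    (f : ℝ → ℝ → ℝ) (uT : ℝ → ℝ) (ψ φ : ℕ → ℕ → ℝ)
    (h : BScheme T σ I J f uT ψ φ) :
    ∀ i < I, ∀ j ≤ J, φ (i+1) j =
      Rop J ((T/(I:ℝ))*(σ^2/2)*(J:ℝ)^2)
        (fun j ξ => -((T/(I:ℝ))/σ^2) * f ((j:ℝ)/(J:ℝ)) ξ) (φ i) (ψ i) j := by
  intro i hi j hj
  have h1 := h.1 i hi j hj
  have hI0 : (I:ℝ) ≠ 0 := Nat.cast_ne_zero.mpr (by omega)
  have hJ0 : (J:ℝ) ≠ 0 := Nat.cast_ne_zero.mpr (by omega)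
  have hσ0 : σ ≠ 0 := ne_of_gt hσ
  have hT0 : T ≠ 0 := ne_of_gt hT
  unfold Rop Lap
  field_simp at h1 ⊢
  linear_combination h1

lemma fscheme_rop (T σ : ℝ) (hT : 0 < T) (hσ : 0 < σ) (I J : ℕ) (hI : 1 ≤ I) (hJ : 1 ≤ J)
    (f : ℝ → ℝ → ℝ) (m0 : ℝ → ℝ) (φ ψ : ℕ → ℕ → ℝ)
    (h : FScheme T σ I J f m0 φ ψ) :
    ∀ i < I, ∀ j ≤ J, ψ i j =
      Rop J ((T/(I:ℝ))*(σ^2/2)*(J:ℝ)^2)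
        (fun j ξ => -((T/(I:ℝ))/σ^2) * f ((j:ℝ)/(J:ℝ)) ξ) (ψ (i+1)) (φ (i+1)) j := by
  intro i hi j hj
  have h1 := h.1 i hi j hj
  rw [mul_comm (φ (i+1) j) (ψ (i+1) j)] at h1
  have hI0 : (I:ℝ) ≠ 0 := Nat.cast_ne_zero.mpr (by omega)
  have hJ0 : (J:ℝ) ≠ 0 := Nat.cast_ne_zero.mpr (by omega)
  have hσ0 : σ ≠ 0 := ne_of_gt hσ
  have hT0 : T ≠ 0 := ne_of_gt hT
  unfold Rop Lap
  field_simp at h1 ⊢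
  linear_combination -h1

theorem stmt_8 (T σ : ℝ) (hT : 0 < T) (hσ : 0 < σ)
    (I J : ℕ) (hI : 1 ≤ I) (hJ : 1 ≤ J)
    (f : ℝ → ℝ → ℝ) (uT m0 : ℝ → ℝ)
    (hfc : ∀ x ∈ Set.Icc (0:ℝ) 1, Continuous (f x))
    (hfb : ∃ B : ℝ, ∀ x ∈ Set.Icc (0:ℝ) 1, ∀ ξ : ℝ, |f x ξ| ≤ B)
    (hfneg : ∀ x ∈ Set.Icc (0:ℝ) 1, ∀ ξ : ℝ, f x ξ ≤ 0)
    (hfmono : ∀ x ∈ Set.Icc (0:ℝ) 1, Antitone (f x))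
    (huTb : ∃ B : ℝ, ∀ x ∈ Set.Icc (0:ℝ) 1, |uT x| ≤ B)
    (hm0b : ∃ B : ℝ, ∀ x ∈ Set.Icc (0:ℝ) 1, |m0 x| ≤ B)
    (hm0 : ∀ x ∈ Set.Icc (0:ℝ) 1, 0 ≤ m0 x)
    (Φs Ψs : ℕ → ℕ → ℕ → ℝ)
    (hΨ0 : ∀ i ≤ I, ∀ j ≤ J, Ψs 0 i j = 0)
    (hB : ∀ n : ℕ, BScheme T σ I J f uT (Ψs n) (Φs n))
    (hF : ∀ n : ℕ, FScheme T σ I J f m0 (Φs n) (Ψs (n+1)))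
 :
    ∃ φ ψ : ℕ → ℕ → ℝ,
      MemM I J (Real.exp (-(supIcc uT + supF f * T) / σ^2)) φ ∧ MemM I J 0 ψ ∧
      (∀ i ≤ I, ∀ j ≤ J,
        Tendsto (fun n => Φs n i j) atTop (nhds (φ i j)) ∧
        Tendsto (fun n => Ψs n i j) atTop (nhds (ψ i j))) ∧
      BScheme T σ I J f uT ψ φ ∧ FScheme T σ I J f m0 φ ψ := by
  -- basic positivity
  have hI0 : (0:ℝ) < I := by exact_mod_cast Nat.lt_of_lt_of_le Nat.zero_lt_one hI
  have hJ0 : (0:ℝ) < J := by exact_mod_cast Nat.lt_of_lt_of_le Nat.zero_lt_one hJ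
  have hσ2 : (0:ℝ) < σ^2 := by positivity
  set rr : ℝ := (T/(I:ℝ))*(σ^2/2)*(J:ℝ)^2 with hrrdef
  set dd : ℕ → ℝ → ℝ := fun j ξ => -((T/(I:ℝ))/σ^2) * f ((j:ℝ)/(J:ℝ)) ξ with hdddef
  have hrr : 0 ≤ rr := by positivity
  have hcoef : 0 ≤ (T/(I:ℝ))/σ^2 := by positivity
  have hxj : ∀ j ≤ J, ((j:ℝ)/(J:ℝ)) ∈ Set.Icc (0:ℝ) 1 := by
    intro j hj
    constructor
    · positivity
    · rw [div_le_one hJ0]; exact_mod_cast hj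
  -- sup bounds
  obtain ⟨Bf, hBf⟩ := hfb
  set K : ℝ := supF f with hKdef
  have hfK : ∀ x ∈ Set.Icc (0:ℝ) 1, ∀ ξ : ℝ, |f x ξ| ≤ K := by
    intro x hx ξ
    have hbdd : BddAbove (Set.range (fun p : Set.Icc (0:ℝ) 1 × ℝ => |f (p.1 : ℝ) p.2|)) := by
      refine ⟨Bf, ?_⟩
      rintro y ⟨⟨⟨a, ha⟩, b⟩, rfl⟩
      exact hBf a ha b
    exact le_ciSup hbdd (⟨⟨x, hx⟩, ξ⟩ : Set.Icc (0:ℝ) 1 × ℝ)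
  have h01 : (0:ℝ) ∈ Set.Icc (0:ℝ) 1 := ⟨le_refl 0, zero_le_one⟩
  have hK0 : 0 ≤ K := le_trans (abs_nonneg _) (hfK 0 h01 0)
  obtain ⟨Bu, hBu⟩ := huTb
  set Mu : ℝ := supIcc uT with hMudef
  have huK : ∀ x ∈ Set.Icc (0:ℝ) 1, |uT x| ≤ Mu := by
    intro x hx
    have hbdd : BddAbove (Set.range (fun p : Set.Icc (0:ℝ) 1 => |uT (p : ℝ)|)) := by
      refine ⟨Bu, ?_⟩
      rintro y ⟨⟨a, ha⟩, rfl⟩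
      exact hBu a ha
    exact le_ciSup hbdd (⟨x, hx⟩ : Set.Icc (0:ℝ) 1)
  -- properties of dd
  set K' : ℝ := (T/(I:ℝ))/σ^2 * K with hK'def
  have hK'0 : 0 ≤ K' := by positivity
  have hd0 : ∀ j ≤ J, ∀ ξ : ℝ, 0 ≤ dd j ξ := by
    intro j hj ξ
    have := hfneg _ (hxj j hj) ξ
    simp only [hdddef]
    nlinarith
  have hdm : ∀ j ≤ J, Monotone (dd j) := by
    intro j hj a b hab
    have := hfmono _ (hxj j hj) hab
    simp only [hdddef]
    nlinarith
  have hdK : ∀ j ≤ J, ∀ ξ : ℝ, dd j ξ ≤ K' := by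
    intro j hj ξ
    have h1 := hfK _ (hxj j hj) ξ
    have h2 : -f ((j:ℝ)/(J:ℝ)) ξ ≤ K := by
      have := neg_abs_le (f ((j:ℝ)/(J:ℝ)) ξ); linarith
    simp only [hdddef, hK'def]
    nlinarith
  -- epsilon levels
  set e0 : ℝ := Real.exp (-Mu/σ^2) with he0def
  have he0 : 0 < e0 := Real.exp_pos _
  set ε : ℝ := Real.exp (-(Mu + K * T) / σ^2) with hεdef
  have hε0 : 0 < ε := Real.exp_pos _
  have hbase : (1:ℝ) ≤ 1 + K' := by linarith
  have hεlev : ∀ k ≤ I, ε ≤ e0 / (1 + K')^k := by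
    intro k hk
    have hp1 : (1 + K')^k ≤ Real.exp (K * T / σ^2) := by
      have h1 : (1 + K')^k ≤ Real.exp K' ^ k := by
        apply pow_le_pow_left₀ (by linarith)
        have := Real.add_one_le_exp K'
        linarith
      have h2 : Real.exp K' ^ k = Real.exp ((k:ℝ) * K') := by
        rw [← Real.exp_nat_mul]
      have h3 : (k:ℝ) * K' ≤ (I:ℝ) * K' := by
        have : (k:ℝ) ≤ (I:ℝ) := by exact_mod_cast hk
        nlinarith
      have h4 : (I:ℝ) * K' = K * T / σ^2 := by
        rw [hK'def]
        field_simp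
      calc (1 + K')^k ≤ Real.exp ((k:ℝ) * K') := by rw [← h2]; exact h1
        _ ≤ Real.exp ((I:ℝ) * K') := Real.exp_le_exp.mpr h3
        _ = Real.exp (K * T / σ^2) := by rw [h4]
    have hεalt : ε = e0 / Real.exp (K * T / σ^2) := by
      rw [hεdef, he0def, ← Real.exp_sub]
      congr 1
      ring
    rw [hεalt]
    exact div_le_div_of_nonneg_left he0.le (by positivity) hp1
  -- lower bound for Φs
  have hφlow : ∀ n : ℕ, ∀ k ≤ I, ∀ j ≤ J, e0 / (1 + K')^k ≤ Φs n (I - k) j := by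
    intro n k
    induction k with
    | zero =>
      intro _ j hj
      have := (hB n).2 j hj
      simp only [Nat.sub_zero, pow_zero, div_one]
      rw [this, he0def]
      apply Real.exp_le_exp.mpr
      have h1 := huK _ (hxj j hj)
      have h2 : -Mu ≤ uT ((j:ℝ)/(J:ℝ)) := by
        have := neg_abs_le (uT ((j:ℝ)/(J:ℝ))); linarith
      exact (div_le_div_iff_of_pos_right hσ2).mpr h2
    | succ k ih =>
      intro hk j hj
      have hkI : k ≤ I := Nat.le_of_succ_le hk
      have hiI : I - (k+1) < I := by omega
      have hip : I - (k+1) + 1 = I - k := by omega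
      have heq : ∀ j' ≤ J, Φs n (I - k) j' =
          Rop J rr dd (Φs n (I - (k+1))) (Ψs n (I - (k+1))) j' := by
        intro j' hj'
        have h := bscheme_rop T σ hT hσ I J hI hJ f uT (Ψs n) (Φs n) (hB n)
          (I - (k+1)) hiI j' hj'
        rw [hip] at h
        exact h
      have hlow := row_lower J rr hrr dd hd0 K' hdK
        (Φs n (I - (k+1))) (Ψs n (I - (k+1))) (Φs n (I - k)) heq
        (e0 / (1 + K')^k) (by positivity) (ih hkI)
      have := hlow j hj
      rw [pow_succ, ← div_div]
      exact this
  have hφε : ∀ n : ℕ, ∀ i ≤ I, ∀ j ≤ J, ε ≤ Φs n i j := by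
    intro n i hi j hj
    have hk : I - i ≤ I := Nat.sub_le _ _
    have h1 := hφlow n (I - i) hk j hj
    have h2 : I - (I - i) = i := by omega
    rw [h2] at h1
    exact le_trans (hεlev _ hk) h1
  -- forward equation in Rop form
  have hfeq : ∀ n : ℕ, ∀ i < I, ∀ j ≤ J, Ψs (n+1) i j =
      Rop J rr dd (Ψs (n+1) (i+1)) (Φs n (i+1)) j := by
    intro n i hi j hj
    exact fscheme_rop T σ hT hσ I J hI hJ f m0 (Φs n) (Ψs (n+1)) (hF n) i hi j hj
  -- nonnegativity of Ψs
  have hψpos : ∀ n : ℕ, ∀ i ≤ I, ∀ j ≤ J, 0 ≤ Ψs n i j := by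
    intro n
    cases n with
    | zero => intro i hi j hj; rw [hΨ0 i hi j hj]
    | succ n =>
      intro i
      induction i with
      | zero =>
        intro _ j hj
        rw [(hF n).2 j hj]
        apply div_nonneg (hm0 _ (hxj j hj))
        exact le_trans hε0.le (hφε n 0 (Nat.zero_le I) j hj)
      | succ i ih =>
        intro hi j hj
        have hiI : i < I := by omega
        exact row_nonneg J rr hrr dd hd0 (Ψs (n+1) (i+1)) (Φs n (i+1)) (Ψs (n+1) i)
          (hfeq n i hiI) (ih (by omega)) j hj
  -- upper bound for Ψs
  obtain ⟨B0, hB0⟩ := hm0b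
  have hB0n : 0 ≤ B0 := le_trans (abs_nonneg _) (hB0 0 h01)
  set Mψ : ℝ := B0 / ε with hMψdef
  have hMψ0 : 0 ≤ Mψ := by positivity
  have hψub : ∀ n : ℕ, ∀ i ≤ I, ∀ j ≤ J, Ψs n i j ≤ Mψ := by
    intro n
    cases n with
    | zero => intro i hi j hj; rw [hΨ0 i hi j hj]; exact hMψ0
    | succ n =>
      intro i
      induction i with
      | zero =>
        intro _ j hj
        rw [(hF n).2 j hj]
        apply div_le_div₀ hB0n
        · have := le_abs_self (m0 ((j:ℝ)/(J:ℝ))); exact le_trans this (hB0 _ (hxj j hj))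
        · exact hε0
        · exact hφε n 0 (Nat.zero_le I) j hj
      | succ i ih =>
        intro hi j hj
        have hiI : i < I := by omega
        exact row_upper J rr hrr dd hd0 (Ψs (n+1) (i+1)) (Φs n (i+1)) (Ψs (n+1) i)
          (hfeq n i hiI) (fun j' hj' => hψpos (n+1) (i+1) hi j' hj') Mψ (ih (by omega)) j hj
  -- antitonicity of the backward map
  have hΦanti : ∀ a b : ℕ, (∀ i ≤ I, ∀ j ≤ J, Ψs a i j ≤ Ψs b i j) →
      ∀ i ≤ I, ∀ j ≤ J, Φs b i j ≤ Φs a i j := by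
    intro a b hab
    have key : ∀ k ≤ I, ∀ j ≤ J, Φs b (I - k) j ≤ Φs a (I - k) j := by
      intro k
      induction k with
      | zero =>
        intro _ j hj
        simp only [Nat.sub_zero]
        rw [(hB a).2 j hj, (hB b).2 j hj]
      | succ k ih =>
        intro hk j hj
        have hkI : k ≤ I := Nat.le_of_succ_le hk
        have hiI : I - (k+1) < I := by omega
        have hip : I - (k+1) + 1 = I - k := by omega
        have heqb : ∀ j' ≤ J, Φs b (I - k) j' =
            Rop J rr dd (Φs b (I - (k+1))) (Ψs b (I - (k+1))) j' := by
          intro j' hj'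
          have h := bscheme_rop T σ hT hσ I J hI hJ f uT (Ψs b) (Φs b) (hB b)
            (I - (k+1)) hiI j' hj'
          rwa [hip] at h
        have heqa : ∀ j' ≤ J, Φs a (I - k) j' =
            Rop J rr dd (Φs a (I - (k+1))) (Ψs a (I - (k+1))) j' := by
          intro j' hj'
          have h := bscheme_rop T σ hT hσ I J hI hJ f uT (Ψs a) (Φs a) (hB a)
            (I - (k+1)) hiI j' hj'
          rwa [hip] at h
        exact comparison J rr hrr dd hd0 hdm
          (Φs b (I - (k+1))) (Φs a (I - (k+1))) (Ψs b (I - (k+1))) (Ψs a (I - (k+1)))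
          (Φs b (I - k)) (Φs a (I - k)) heqb heqa
          (fun j' hj' => le_trans hε0.le (hφε a _ (by omega) j' hj'))
          (fun j' hj' => hψpos a _ (by omega) j' hj')
          (fun j' hj' => hab _ (by omega) j' hj')
          (fun j' hj' => ih hkI j' hj') j hj
    intro i hi j hj
    have h2 : I - (I - i) = i := by omega
    have := key (I - i) (Nat.sub_le _ _) j hj
    rwa [h2] at this
  -- antitonicity of the forward map
  have hΨanti : ∀ a b : ℕ, (∀ i ≤ I, ∀ j ≤ J, Φs b i j ≤ Φs a i j) →
      ∀ i ≤ I, ∀ j ≤ J, Ψs (a+1) i j ≤ Ψs (b+1) i j := by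
    intro a b hab i
    induction i with
    | zero =>
      intro _ j hj
      rw [(hF a).2 j hj, (hF b).2 j hj]
      have h1 : 0 < Φs a 0 j := lt_of_lt_of_le hε0 (hφε a 0 (Nat.zero_le I) j hj)
      have h2 : 0 < Φs b 0 j := lt_of_lt_of_le hε0 (hφε b 0 (Nat.zero_le I) j hj)
      exact div_le_div_of_nonneg_left (hm0 _ (hxj j hj)) h2 (hab 0 (Nat.zero_le I) j hj)
    | succ i ih =>
      intro hi j hj
      have hiI : i < I := by omega
      exact comparison J rr hrr dd hd0 hdm
        (Ψs (a+1) (i+1)) (Ψs (b+1) (i+1)) (Φs a (i+1)) (Φs b (i+1))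
        (Ψs (a+1) i) (Ψs (b+1) i) (hfeq a i hiI) (hfeq b i hiI)
        (fun j' hj' => hψpos (b+1) (i+1) hi j' hj')
        (fun j' hj' => le_trans hε0.le (hφε b (i+1) hi j' hj'))
        (fun j' hj' => hab (i+1) hi j' hj')
        (fun j' hj' => ih (by omega) j' hj') j hj
  -- monotonicity in n
  have hψmono : ∀ n : ℕ, ∀ i ≤ I, ∀ j ≤ J, Ψs n i j ≤ Ψs (n+1) i j := by
    intro n
    induction n with
    | zero =>
      intro i hi j hj
      rw [hΨ0 i hi j hj]
      exact hψpos 1 i hi j hj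
    | succ n ih =>
      exact hΨanti n (n+1) (hΦanti n (n+1) ih)
  have hφmono : ∀ n : ℕ, ∀ i ≤ I, ∀ j ≤ J, Φs (n+1) i j ≤ Φs n i j := by
    intro n
    exact hΦanti n (n+1) (hψmono n)
  -- the limits
  set φl : ℕ → ℕ → ℝ := fun i j => ⨅ n, Φs n i j with hφldef
  set ψl : ℕ → ℕ → ℝ := fun i j => ⨆ n, Ψs n i j with hψldef
  have hφt : ∀ i ≤ I, ∀ j ≤ J, Tendsto (fun n => Φs n i j) atTop (nhds (φl i j)) := by
    intro i hi j hj
    apply tendsto_atTop_ciInf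
    · exact antitone_nat_of_succ_le (fun n => hφmono n i hi j hj)
    · exact ⟨ε, by rintro y ⟨n, rfl⟩; exact hφε n i hi j hj⟩
  have hψt : ∀ i ≤ I, ∀ j ≤ J, Tendsto (fun n => Ψs n i j) atTop (nhds (ψl i j)) := by
    intro i hi j hj
    apply tendsto_atTop_ciSup
    · exact monotone_nat_of_le_succ (fun n => hψmono n i hi j hj)
    · exact ⟨Mψ, by rintro y ⟨n, rfl⟩; exact hψub n i hi j hj⟩
  have hψt' : ∀ i ≤ I, ∀ j ≤ J, Tendsto (fun n => Ψs (n+1) i j) atTop (nhds (ψl i j)) := by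
    intro i hi j hj
    exact (hψt i hi j hj).comp (tendsto_add_atTop_nat 1)
  have hMemφ : ∀ i ≤ I, ∀ j ≤ J, ε ≤ φl i j := by
    intro i hi j hj
    exact le_ciInf (fun n => hφε n i hi j hj)
  have hMemψ : ∀ i ≤ I, ∀ j ≤ J, (0:ℝ) ≤ ψl i j := by
    intro i hi j hj
    have h1 : Ψs 0 i j ≤ ψl i j :=
      le_ciSup ⟨Mψ, by rintro y ⟨n, rfl⟩; exact hψub n i hi j hj⟩ 0
    rw [hΨ0 i hi j hj] at h1
    exact h1
  refine ⟨φl, ψl, hMemφ, hMemψ, fun i hi j hj => ⟨hφt i hi j hj, hψt i hi j hj⟩, ⟨?_, ?_⟩, ⟨?_, ?_⟩⟩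
  · -- backward equation for the limit
    intro i hi j hj
    have hi' : i ≤ I := le_of_lt hi
    have t1 := hφt (i+1) (by omega) j hj
    have t2 := hφt i hi' j hj
    have t3 := hφt i hi' (min (j+1) J) (min_le_right _ _)
    have t4 := hφt i hi' (j-1) (le_trans (Nat.sub_le _ _) hj)
    have s2 := hψt i hi' j hj
    have hx := hxj j hj
    have hLt : Tendsto (fun n => (Φs n (i+1) j - Φs n i j) / (T / (I:ℝ))
        + σ^2 / 2 * ((Φs n i (min (j+1) J) - 2 * Φs n i j + Φs n i (j-1)) / (1/(J:ℝ))^2))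
        atTop (nhds ((φl (i+1) j - φl i j) / (T / (I:ℝ))
        + σ^2 / 2 * ((φl i (min (j+1) J) - 2 * φl i j + φl i (j-1)) / (1/(J:ℝ))^2))) := by
      exact ((t1.sub t2).div_const _).add
        ((((t3.sub (t2.const_mul 2)).add t4).div_const _).const_mul _)
    have hf : Tendsto (fun n => f ((j:ℝ)/(J:ℝ)) (Φs n i j * Ψs n i j)) atTop
        (nhds (f ((j:ℝ)/(J:ℝ)) (φl i j * ψl i j))) :=
      ((hfc _ hx).tendsto _).comp (t2.mul s2)
    have hRt : Tendsto (fun n => -(1/σ^2) * f ((j:ℝ)/(J:ℝ)) (Φs n i j * Ψs n i j) * Φs n i j)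
        atTop (nhds (-(1/σ^2) * f ((j:ℝ)/(J:ℝ)) (φl i j * ψl i j) * φl i j)) :=
      (hf.const_mul _).mul t2
    exact tendsto_nhds_unique hLt (hRt.congr (fun n => ((hB n).1 i hi j hj).symm))
  · -- terminal condition for the limit
    intro j hj
    exact tendsto_nhds_unique (hφt I le_rfl j hj)
      (tendsto_const_nhds.congr (fun n => ((hB n).2 j hj).symm))
  · -- forward equation for the limit
    intro i hi j hj
    have hi1 : i + 1 ≤ I := by omega
    have t1 := hψt' (i+1) hi1 j hj
    have t2 := hψt' i (le_of_lt hi) j hj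
    have t3 := hψt' (i+1) hi1 (min (j+1) J) (min_le_right _ _)
    have t4 := hψt' (i+1) hi1 (j-1) (le_trans (Nat.sub_le _ _) hj)
    have w1 := hφt (i+1) hi1 j hj
    have hx := hxj j hj
    have hLt : Tendsto (fun n => (Ψs (n+1) (i+1) j - Ψs (n+1) i j) / (T / (I:ℝ))
        - σ^2 / 2 * ((Ψs (n+1) (i+1) (min (j+1) J) - 2 * Ψs (n+1) (i+1) j + Ψs (n+1) (i+1) (j-1)) / (1/(J:ℝ))^2))
        atTop (nhds ((ψl (i+1) j - ψl i j) / (T / (I:ℝ))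
        - σ^2 / 2 * ((ψl (i+1) (min (j+1) J) - 2 * ψl (i+1) j + ψl (i+1) (j-1)) / (1/(J:ℝ))^2))) := by
      exact ((t1.sub t2).div_const _).sub
        ((((t3.sub (t1.const_mul 2)).add t4).div_const _).const_mul _)
    have hf : Tendsto (fun n => f ((j:ℝ)/(J:ℝ)) (Φs n (i+1) j * Ψs (n+1) (i+1) j)) atTop
        (nhds (f ((j:ℝ)/(J:ℝ)) (φl (i+1) j * ψl (i+1) j))) :=
      ((hfc _ hx).tendsto _).comp (w1.mul t1)
    have hRt : Tendsto (fun n => (1/σ^2) * f ((j:ℝ)/(J:ℝ)) (Φs n (i+1) j * Ψs (n+1) (i+1) j) * Ψs (n+1) (i+1) j)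
        atTop (nhds ((1/σ^2) * f ((j:ℝ)/(J:ℝ)) (φl (i+1) j * ψl (i+1) j) * ψl (i+1) j)) :=
      (hf.const_mul _).mul t1
    exact tendsto_nhds_unique hLt (hRt.congr (fun n => ((hF n).1 i hi j hj).symm))
  · -- initial condition for the limit
    intro j hj
    have hL := hψt' 0 (Nat.zero_le I) j hj
    have hφne : φl 0 j ≠ 0 := ne_of_gt (lt_of_lt_of_le hε0 (hMemφ 0 (Nat.zero_le I) j hj))
    have hR : Tendsto (fun n => m0 ((j:ℝ)/(J:ℝ)) / Φs n 0 j) atTop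
        (nhds (m0 ((j:ℝ)/(J:ℝ)) / φl 0 j)) :=
      tendsto_const_nhds.div (hφt 0 (Nat.zero_le I) j hj) hφne
    exact tendsto_nhds_unique hL (hR.congr (fun n => ((hF n).2 j hj).symm))
end
end
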